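/- arXiv:2307.04932 — 10 statements merged into one kernel-verified Lean document; each statement's English description precedes it below -/
import Mathlib

section
/- Let a, b, s, h be positive integers with r = a + b and s ≥ 2, let n ≥ s − 1, and let S ⊆ [n] with |S| = s − 1. Then the r-graph H = { e ⊆ [n] : |e| = r and e ∩ S ≠ ∅ } contains no bush B_{s,h}(a,b), and |H| = C(n,r) − C(n−s+1, r), where C(m,k) denotes the binomial coefficient. -/
/-- An `r`-graph `H` contains the bush `B_{s,h}(a,b)`. -/
def ContainsBush (a b s h : ℕ) (H : Finset (Finset ℕ)) : Prop :=
  ∃ (A : Finset ℕ) (B : Fin s → Finset ℕ) (P : Fin s → Fin h → Finset ℕ),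
    A.card = a ∧ (∀ i, (B i).card = b) ∧ (∀ i j, (P i j).card = a) ∧
    (∀ i, Disjoint A (B i)) ∧ (∀ i j, Disjoint A (P i j)) ∧
    (∀ i i', i ≠ i' → Disjoint (B i) (B i')) ∧
    (∀ i j i' j', (i, j) ≠ (i', j') → Disjoint (P i j) (P i' j')) ∧
    (∀ i i' j, Disjoint (B i) (P i' j)) ∧
    (∀ i, A ∪ B i ∈ H) ∧ (∀ i j, B i ∪ P i j ∈ H)

/-- The `r`-graph of all `r`-subsets of `[n]` meeting a fixed `(s-1)`-set `S` is
bush-free and has exactly `C(n,r) - C(n-s+1,r)` edges. -/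
theorem bush_free_construction (a b s h r n : ℕ) (ha : 0 < a) (hb : 0 < b) (hs : 2 ≤ s)
    (hh : 0 < h) (hr : r = a + b) (hn : s - 1 ≤ n)
    (S : Finset ℕ) (hS : S ⊆ Finset.Icc 1 n) (hScard : S.card = s - 1)
    (H : Finset (Finset ℕ))
    (hH : H = ((Finset.Icc 1 n).powersetCard r).filter fun e => (e ∩ S).Nonempty) :
    ¬ ContainsBush a b s h H ∧ H.card = n.choose r - (n + 1 - s).choose r := by
  constructor
  · rintro ⟨A, B, P, hA, hB, hP, hAB, hAP, hBB, hPP, hBP, hABH, hBPH⟩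
    have j0 : Fin h := ⟨0, hh⟩
    have hne : ∀ i : Fin s, ((B i ∪ P i j0) ∩ S).Nonempty := by
      intro i
      have := hBPH i j0
      rw [hH, Finset.mem_filter] at this
      exact this.2
    choose x hx using hne
    have hxS : ∀ i, x i ∈ S := fun i => (Finset.mem_inter.mp (hx i)).2
    have hxU : ∀ i, x i ∈ B i ∪ P i j0 := fun i => (Finset.mem_inter.mp (hx i)).1
    have hinj : Function.Injective x := by
      intro i i' hii
      by_contra hne'
      have hd : Disjoint (B i ∪ P i j0) (B i' ∪ P i' j0) := by
        simp only [Finset.disjoint_union_left, Finset.disjoint_union_right]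
        exact ⟨⟨hBB i i' hne', (hBP i' i j0).symm⟩,
          ⟨hBP i i' j0, hPP i j0 i' j0 (by simp [hne'])⟩⟩
      exact Finset.disjoint_left.mp hd (hxU i) (by rw [hii]; exact hxU i')
    have hle : s ≤ s - 1 := by
      have := Finset.card_le_card_of_injOn (f := x)
        (s := (Finset.univ : Finset (Fin s))) (t := S)
        (fun i _ => hxS i) (fun i _ i' _ h => hinj h)
      simpa [hScard] using this
    omega
  · subst hH
    have hTcard : (Finset.Icc 1 n).card = n := by simp
    have hsplit := Finset.card_filter_add_card_filter_not
      (s := (Finset.Icc 1 n).powersetCard r) (p := fun e => (e ∩ S).Nonempty)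
    have hcompl : ((Finset.Icc 1 n).powersetCard r).filter (fun e => ¬ (e ∩ S).Nonempty)
        = ((Finset.Icc 1 n) \ S).powersetCard r := by
      ext e
      simp only [Finset.mem_filter, Finset.mem_powersetCard, Finset.not_nonempty_iff_eq_empty,
        Finset.subset_sdiff]
      constructor
      · rintro ⟨⟨he, hc⟩, hemp⟩
        refine ⟨⟨he, Finset.disjoint_left.mpr fun p hp hpS => ?_⟩, hc⟩
        have : p ∈ e ∩ S := Finset.mem_inter.mpr ⟨hp, hpS⟩
        simp [hemp] at this
      · rintro ⟨⟨he, hd⟩, hc⟩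
        refine ⟨⟨he, hc⟩, ?_⟩
        rw [Finset.eq_empty_iff_forall_notMem]
        intro p hp
        rw [Finset.mem_inter] at hp
        exact Finset.disjoint_left.mp hd hp.1 hp.2
    have hsd : ((Finset.Icc 1 n) \ S).card = n + 1 - s := by
      rw [Finset.card_sdiff_of_subset hS, hTcard, hScard]; omega
    have h1 : ((Finset.Icc 1 n).powersetCard r).card = n.choose r := by
      rw [Finset.card_powersetCard, hTcard]
    have h2 : (((Finset.Icc 1 n) \ S).powersetCard r).card = (n + 1 - s).choose r := by
      rw [Finset.card_powersetCard, hsd]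
    rw [hcompl] at hsplit
    omega
end

section
/- Let r ≥ 3, s ≥ 2, n ≥ s − 1, and let A be a fixed (s−1)-element subset of [n]. Let E_1 = { e ⊆ [n] : |e| = r and |e ∩ A| = 1 }, and let E_2 be any family of r-element subsets of [n] \ A such that every (r−1)-element subset of [n] \ A is contained in at most one member of E_2. Then the r-graph E_1 ∪ E_2 contains no bush B_{s,2}(1, r−1). -/
/-- The `r`-graph `E₁ ∪ E₂`, where `E₁` consists of all `r`-subsets of `[n]` meeting a fixed
`(s-1)`-set `A` in exactly one vertex, and `E₂` is a partial Steiner system on `[n] \ A`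
(every `(r-1)`-subset of `[n] \ A` lies in at most one member), contains no bush
`B_{s,2}(1, r-1)`. -/
theorem steiner_construction_bush_free (r s n : ℕ) (hr : 3 ≤ r) (hs : 2 ≤ s) (hn : s - 1 ≤ n)
    (A : Finset ℕ) (hA : A ⊆ Finset.Icc 1 n) (hAcard : A.card = s - 1)
    (E1 E2 : Finset (Finset ℕ))
    (hE1 : E1 = ((Finset.Icc 1 n).powersetCard r).filter fun e => (e ∩ A).card = 1)
    (hE2 : ∀ e ∈ E2, e ⊆ Finset.Icc 1 n \ A ∧ e.card = r)
    (hSteiner : ∀ Y : Finset ℕ, Y ⊆ Finset.Icc 1 n \ A → Y.card = r - 1 →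
      (E2.filter fun e => Y ⊆ e).card ≤ 1) :
    ¬ ContainsBush 1 (r - 1) s 2 (E1 ∪ E2) := by
  rintro ⟨A0, B, P, hA0, hB, hP, hA0B, hA0P, hBB, hPP, hBP, hmem1, hmem2⟩
  -- For each i, find q i ∈ A lying in B i ∪ P i 0 ∪ P i 1
  have key : ∀ i : Fin s, ∃ q, q ∈ A ∧ q ∈ B i ∪ P i 0 ∪ P i 1 := by
    intro i
    have hnot : ¬ (B i ∪ P i 0 ∈ E2 ∧ B i ∪ P i 1 ∈ E2) := by
      rintro ⟨h0, h1⟩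
      have hBsub : B i ⊆ Finset.Icc 1 n \ A :=
        Finset.Subset.trans Finset.subset_union_left (hE2 _ h0).1
      have heq : B i ∪ P i 0 = B i ∪ P i 1 := by
        by_contra hne
        have h2 : ({B i ∪ P i 0, B i ∪ P i 1} : Finset (Finset ℕ)) ⊆
            E2.filter fun e => B i ⊆ e := by
          intro e he
          simp only [Finset.mem_insert, Finset.mem_singleton] at he
          rcases he with rfl | rfl <;>
            simp [Finset.mem_filter, h0, h1, Finset.subset_union_left]
        have hle := Finset.card_le_card h2
        rw [Finset.card_pair hne] at hle
        have := hSteiner (B i) hBsub (hB i)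
        omega
      obtain ⟨p, hp⟩ := Finset.card_eq_one.mp (hP i 0)
      have hpmem : p ∈ B i ∪ P i 1 := by
        rw [← heq]; exact Finset.mem_union_right _ (by simp [hp])
      rcases Finset.mem_union.mp hpmem with h | h
      · exact (Finset.disjoint_left.mp (hBP i i 0)) h (by simp [hp])
      · exact (Finset.disjoint_left.mp (hPP i 0 i 1 (by simp)))
          (by simp [hp]) h
    have hEx : ∃ j : Fin 2, B i ∪ P i j ∈ E1 := by
      rcases Finset.mem_union.mp (hmem2 i 0) with h | h
      · exact ⟨0, h⟩
      rcases Finset.mem_union.mp (hmem2 i 1) with h' | h'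
      · exact ⟨1, h'⟩
      · exact absurd ⟨h, h'⟩ hnot
    obtain ⟨j, hj⟩ := hEx
    rw [hE1, Finset.mem_filter] at hj
    obtain ⟨q, hq⟩ := Finset.card_eq_one.mp hj.2
    have hqmem : q ∈ (B i ∪ P i j) ∩ A := by rw [hq]; simp
    refine ⟨q, (Finset.mem_inter.mp hqmem).2, ?_⟩
    rcases Finset.mem_union.mp (Finset.mem_inter.mp hqmem).1 with h | h
    · exact Finset.mem_union_left _ (Finset.mem_union_left _ h)
    · fin_cases j
      · exact Finset.mem_union_left _ (Finset.mem_union_right _ h)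
      · exact Finset.mem_union_right _ h
  choose q hqA hqS using key
  have hinj : ∀ i i' : Fin s, i ≠ i' → q i ≠ q i' := by
    intro i i' hne heq
    have hpne : ∀ (j j' : Fin 2), ((i, j) : Fin s × Fin 2) ≠ (i', j') :=
      fun j j' h => hne (congrArg Prod.fst h)
    have hd : Disjoint (B i ∪ P i 0 ∪ P i 1) (B i' ∪ P i' 0 ∪ P i' 1) := by
      simp only [Finset.disjoint_union_left, Finset.disjoint_union_right]
      repeat' constructor
      all_goals first
        | exact hBB i i' hne
        | exact hBP i i' _
        | exact (hBP i' i _).symm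
        | exact hPP _ _ _ _ (hpne _ _)
    have h1 := hqS i
    rw [heq] at h1
    exact Finset.disjoint_left.mp hd h1 (hqS i')
  have hcard : s ≤ A.card := by
    have hle : (Finset.univ : Finset (Fin s)).card ≤ A.card :=
      Finset.card_le_card_of_injOn q (fun i _ => hqA i)
        (fun i _ i' _ h => by_contra fun hne => hinj i i' hne h)
    simpa using hle
  omega
end

section
/- Let F be a family of r-element subsets of [n] that is r-partite with partition (X_1,…,X_r), and let M ⊆ [r]. Suppose that for every two distinct members F_1, F_2 ∈ F, the pattern Π(F_1 ∩ F_2) does not contain M. Then the map sending F ∈ F to F ∩ (⋃_{j∈M} X_j) is injective on F; consequently |F| ≤ ∏_{j∈M} |X_j|. -/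
/-- `X : Fin r → Finset ℕ` is a partition of `[n]`. -/
def IsPartitionOf (n r : ℕ) (X : Fin r → Finset ℕ) : Prop :=
  (∀ i j : Fin r, i ≠ j → Disjoint (X i) (X j)) ∧
    Finset.univ.biUnion X = Finset.Icc 1 n

/-- The pattern `Π(S)` of a set `S` with respect to the partition `X`. -/
def pattern {r : ℕ} (X : Fin r → Finset ℕ) (S : Finset ℕ) : Finset (Fin r) :=
  Finset.univ.filter fun i => (S ∩ X i).Nonempty

/-- The intersection structure `I(F, 𝓕) = {F ∩ F' : F' ∈ 𝓕 \ {F}}`. -/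
def interStr (F : Finset ℕ) (𝓕 : Finset (Finset ℕ)) : Finset (Finset ℕ) :=
  (𝓕.erase F).image fun F' => F ∩ F'

/-- Remark 2: if `F` is `r`-partite with partition `(X₁,…,X_r)` and no pattern of a pairwise
intersection contains `M ⊆ [r]`, then `F ↦ F ∩ ⋃_{j ∈ M} X_j` is injective on `F`, so
`|F| ≤ ∏_{j ∈ M} |X_j|`. -/
theorem pattern_injective (n r : ℕ) (F : Finset (Finset ℕ))
    (hF : ∀ e ∈ F, e ⊆ Finset.Icc 1 n ∧ e.card = r)
    (X : Fin r → Finset ℕ) (hX : IsPartitionOf n r X)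
    (hpartite : ∀ e ∈ F, ∀ i, (e ∩ X i).card = 1)
    (M : Finset (Fin r))
    (hM : ∀ F₁ ∈ F, ∀ F₂ ∈ F, F₁ ≠ F₂ → ¬ M ⊆ pattern X (F₁ ∩ F₂)) :
    Set.InjOn (fun e => e ∩ M.biUnion X) ↑F ∧ F.card ≤ ∏ j ∈ M, (X j).card := by
  have key : ∀ e, ∀ j ∈ M, e ∩ M.biUnion X ∩ X j = e ∩ X j := by
    intro e j hj
    rw [Finset.inter_assoc]
    congr 1
    apply Finset.inter_eq_right.mpr
    intro x hx
    exact Finset.mem_biUnion.mpr ⟨j, hj, hx⟩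
  have hinj : Set.InjOn (fun e => e ∩ M.biUnion X) ↑F := by
    intro a ha b hb hab
    by_contra hne
    apply hM a ha b hb hne
    intro j hj
    simp only [pattern, Finset.mem_filter, Finset.mem_univ, true_and]
    obtain ⟨x, hx⟩ := Finset.card_eq_one.mp (hpartite a ha j)
    have hxa : x ∈ a ∩ X j := hx ▸ Finset.mem_singleton_self x
    have hXeq : a ∩ X j = b ∩ X j := by
      rw [← key a j hj, ← key b j hj]
      simp only at hab
      rw [hab]
    refine ⟨x, ?_⟩
    rw [Finset.inter_assoc]
    have hxb : x ∈ b ∩ X j := hXeq ▸ hxa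
    exact Finset.mem_inter.mpr ⟨(Finset.mem_inter.mp hxa).1, hxb⟩
  refine ⟨hinj, ?_⟩
  have hcard : F.card ≤ (M.pi fun j => X j).card := by
    apply Finset.card_le_card_of_injOn (fun e => fun j _ => (e ∩ X j).sum id)
    · intro e he
      simp only [Finset.mem_coe, Finset.mem_pi]
      intro j hj
      obtain ⟨x, hx⟩ := Finset.card_eq_one.mp (hpartite e he j)
      have hxa : x ∈ e ∩ X j := hx ▸ Finset.mem_singleton_self x
      rw [hx]
      simpa using (Finset.mem_inter.mp hxa).2
    · intro e₁ h1 e₂ h2 heq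
      apply hinj h1 h2
      simp only
      ext x
      simp only [Finset.mem_inter, Finset.mem_biUnion]
      have hsec : ∀ j ∈ M, e₁ ∩ X j = e₂ ∩ X j := by
        intro j hj
        obtain ⟨y, hy⟩ := Finset.card_eq_one.mp (hpartite e₁ h1 j)
        obtain ⟨z, hz⟩ := Finset.card_eq_one.mp (hpartite e₂ h2 j)
        have := congrFun (congrFun heq j) hj
        simp only [hy, hz, Finset.sum_singleton, id] at this
        rw [hy, hz, this]
      constructor
      · rintro ⟨hx1, j, hj, hxj⟩
        have : x ∈ e₂ ∩ X j := (hsec j hj) ▸ Finset.mem_inter.mpr ⟨hx1, hxj⟩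
        exact ⟨(Finset.mem_inter.mp this).1, j, hj, (Finset.mem_inter.mp this).2⟩
      · rintro ⟨hx1, j, hj, hxj⟩
        have : x ∈ e₁ ∩ X j := (hsec j hj) ▸ Finset.mem_inter.mpr ⟨hx1, hxj⟩
        exact ⟨(Finset.mem_inter.mp this).1, j, hj, (Finset.mem_inter.mp this).2⟩
  rwa [Finset.card_pi] at hcard
end

section
/- Let r ≥ 2 and let J be a family of proper subsets of [r] that is (r−2)-covering and closed under intersection. Then there exist an integer k with 0 ≤ k ≤ r and a bijection σ of [r] such that { σ(A) : A ∈ J^(k) } ⊆ J (where σ(A) denotes the image of the set A under σ); that is, J contains a subfamily isomorphic to some J^(k). -/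
/-- The generating sets of `J^(k)`: the sets `[r] \ {i}` for `i ≤ k` (as elements of `Fin r`
with value `< k`), and all `(r-2)`-element subsets of `[r]` containing `{1,…,k}`. -/
def JkGens (r k : ℕ) : Finset (Finset (Fin r)) :=
  ((Finset.univ.filter fun i : Fin r => (i : ℕ) < k).image fun i => Finset.univ.erase i) ∪
    ((Finset.univ : Finset (Fin r)).powersetCard (r - 2)).filter
      fun S => ∀ i : Fin r, (i : ℕ) < k → i ∈ S

/-- The family `J^(k)`: all intersections of nonempty subfamilies of the generators. -/
def Jk (r k : ℕ) : Finset (Finset (Fin r)) :=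
  ((JkGens r k).powerset.filter Finset.Nonempty).image fun G => G.inf id

/-- Statement (2.2): every `(r-2)`-covering family of proper subsets of `[r]` closed under
intersection contains a subfamily isomorphic to some `J^(k)`. -/
theorem covering_contains_Jk (r : ℕ) (hr : 2 ≤ r) (J : Finset (Finset (Fin r)))
    (hproper : ∀ A ∈ J, A ⊂ Finset.univ)
    (hcover : ∀ S : Finset (Fin r), S.card = r - 2 → ∃ B ∈ J, S ⊆ B)
    (hinter : ∀ A ∈ J, ∀ B ∈ J, A ∩ B ∈ J) :
    ∃ k ≤ r, ∃ σ : Equiv.Perm (Fin r), ∀ A ∈ Jk r k, A.image σ ∈ J := by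
  classical
  set K : Finset (Fin r) := Finset.univ.filter (fun i => Finset.univ.erase i ∈ J) with hK
  set k := K.card with hk
  have hkr : k ≤ r := le_trans (Finset.card_le_univ K) (by simp)
  -- cardinality of the "< k" subtype
  have hcard1 : Fintype.card {x : Fin r // (x : ℕ) < k} = k := by
    have : {x : Fin r // (x : ℕ) < k} ≃ Fin k :=
      { toFun := fun x => ⟨x.1, x.2⟩
        invFun := fun i => ⟨⟨i, lt_of_lt_of_le i.2 hkr⟩, i.2⟩
        left_inv := fun x => by ext; rfl
        right_inv := fun i => rfl }
    simp [Fintype.card_congr this]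
  have hcard2 : Fintype.card {x : Fin r // x ∈ K} = k := by
    simp [hk]
  have e : {x : Fin r // (x : ℕ) < k} ≃ {x : Fin r // x ∈ K} :=
    Fintype.equivOfCardEq (by rw [hcard1, hcard2])
  have f : {x : Fin r // ¬ (x : ℕ) < k} ≃ {x : Fin r // ¬ x ∈ K} :=
    Fintype.equivOfCardEq (by
      rw [Fintype.card_subtype_compl, Fintype.card_subtype_compl, hcard1, hcard2])
  set σ : Equiv.Perm (Fin r) := Equiv.subtypeCongr e f with hσ
  have hσmem : ∀ x : Fin r, σ x ∈ K ↔ (x : ℕ) < k := by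
    intro x
    by_cases h : (x : ℕ) < k
    · have hx : σ x = ↑(e ⟨x, h⟩) := by
        simp [hσ, Equiv.subtypeCongr, Equiv.sumCompl, h]
      rw [hx]
      exact iff_of_true (e ⟨x, h⟩).2 h
    · have hx : σ x = ↑(f ⟨x, h⟩) := by
        simp [hσ, Equiv.subtypeCongr, Equiv.sumCompl, h]
      rw [hx]
      exact iff_of_false (f ⟨x, h⟩).2 h
  refine ⟨k, hkr, σ, ?_⟩
  -- each generator's image is in J
  have hgen : ∀ g ∈ JkGens r k, g.image σ ∈ J := by
    intro g hg
    rw [JkGens, Finset.mem_union] at hg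
    rcases hg with hg | hg
    · rcases Finset.mem_image.mp hg with ⟨i, hi, rfl⟩
      rw [Finset.mem_filter] at hi
      rw [Finset.image_erase σ.injective, Finset.image_univ_equiv]
      have : σ i ∈ K := (hσmem i).mpr hi.2
      rw [hK, Finset.mem_filter] at this
      exact this.2
    · rw [Finset.mem_filter, Finset.mem_powersetCard_univ] at hg
      have hcardim : (g.image σ).card = r - 2 := by
        rw [Finset.card_image_of_injective _ σ.injective, hg.1]
      obtain ⟨B, hBJ, hsub⟩ := hcover _ hcardim
      have hBcard : B.card ≤ r - 1 := by
        have := Finset.card_lt_card (hproper B hBJ)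
        simp only [Finset.card_univ, Fintype.card_fin] at this
        omega
      have hge : r - 2 ≤ B.card := hcardim ▸ Finset.card_le_card hsub
      rcases eq_or_lt_of_le hge with heq | hlt
      · have : g.image σ = B := Finset.eq_of_subset_of_card_le hsub (by omega)
        rwa [this]
      · -- B has card r - 1, so B = univ.erase j
        have hB : B.card = r - 1 := by omega
        have : Bᶜ.card = 1 := by
          rw [Finset.card_compl, hB]
          simp; omega
        obtain ⟨j, hj⟩ := Finset.card_eq_one.mp this
        have hBj : B = Finset.univ.erase j := by
          have := congrArg (·ᶜ) hj
          simp only [compl_compl] at this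
          rw [this]
          ext x; simp [Finset.mem_compl, Finset.mem_erase, eq_comm, and_comm]
        have hjK : j ∈ K := by
          rw [hK, Finset.mem_filter]
          exact ⟨Finset.mem_univ _, hBj ▸ hBJ⟩
        -- j = σ i with (i:ℕ) < k, and i ∈ g, so σ i ∈ image ⊆ B = erase j; contradiction
        set i := σ.symm j with hi
        have hik : (i : ℕ) < k := by
          rw [← hσmem i, hi, Equiv.apply_symm_apply]; exact hjK
        have hig : i ∈ g := hg.2 i hik
        have : σ i ∈ B := hsub (Finset.mem_image_of_mem σ hig)
        rw [hBj, hi, Equiv.apply_symm_apply] at this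
        simp at this
  -- intersections
  intro A hA
  rw [Jk, Finset.mem_image] at hA
  obtain ⟨G, hG, rfl⟩ := hA
  rw [Finset.mem_filter, Finset.mem_powerset] at hG
  obtain ⟨hGsub, hGne⟩ := hG
  induction hGne using Finset.Nonempty.cons_induction with
  | singleton g => simpa using hgen g (hGsub (by simp))
  | cons g s hgs hs ih =>
      have h1 : g.image σ ∈ J := hgen g (hGsub (Finset.mem_cons_self g s))
      have h2 : (s.inf id).image σ ∈ J := ih (fun x hx => hGsub (Finset.mem_cons.mpr (Or.inr hx)))
      rw [Finset.inf_cons, id_eq, show g ⊓ s.inf id = g ∩ s.inf id from rfl,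
        Finset.image_inter _ _ σ.injective]
      exact hinter _ h1 _ h2
end

section
/- Let a, b, s, h be positive integers with r = a + b, and let H be an r-graph that does not contain the bush B_{s,h}(a,b). Then there do not exist pairwise disjoint vertex sets A_0, B_1, B_2, …, B_s with |A_0| = a and |B_1| = … = |B_s| = b such that every B_i is a (b, s·h·r)-kernel in H and A_0 ∪ B_i is an edge of H for every i = 1,…,s. -/
lemma bad_card_le (S : Finset (Finset ℕ)) (B F : Finset ℕ)
    (hker : ∀ e₁ ∈ S, ∀ e₂ ∈ S, e₁ ≠ e₂ → e₁ ∩ e₂ = B) :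
    ((S.filter fun e => ¬ Disjoint (e \ B) F)).card ≤ (F \ B).card := by
  classical
  set bad := S.filter fun e => ¬ Disjoint (e \ B) F with hbad
  have hwit : ∀ e ∈ bad, ∃ v, v ∈ e ∧ v ∉ B ∧ v ∈ F := by
    intro e he
    simp only [hbad, Finset.mem_filter] at he
    obtain ⟨v, hv1, hv2⟩ := Finset.not_disjoint_iff.mp he.2
    simp only [Finset.mem_sdiff] at hv1
    exact ⟨v, hv1.1, hv1.2, hv2⟩
  choose f hf1 hf2 hf3 using hwit
  let g : Finset ℕ → ℕ := fun e => if he : e ∈ bad then f e he else 0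
  apply Finset.card_le_card_of_injOn g
  · intro e he
    simp only [Finset.mem_coe] at he
    simp only [g, dif_pos he, Finset.mem_coe, Finset.mem_sdiff]
    exact ⟨hf3 e he, hf2 e he⟩
  · intro e₁ he₁ e₂ he₂ hg
    simp only [Finset.mem_coe] at he₁ he₂
    simp only [g, dif_pos he₁, dif_pos he₂] at hg
    by_contra hne
    have heS₁ : e₁ ∈ S := (Finset.mem_filter.mp he₁).1
    have heS₂ : e₂ ∈ S := (Finset.mem_filter.mp he₂).1
    have : f e₁ he₁ ∈ e₁ ∩ e₂ := by
      rw [Finset.mem_inter]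
      exact ⟨hf1 e₁ he₁, hg ▸ hf1 e₂ he₂⟩
    rw [hker e₁ heS₁ e₂ heS₂ hne] at this
    exact hf2 e₁ he₁ this

lemma harith (a b s' h : ℕ) (hb : 1 ≤ b) (hh : 1 ≤ h) :
    a + s'*b + s'*(h*a) + h ≤ (s'+1)*h*(a+b) := by
  have h1 : a ≤ h*a := Nat.le_mul_of_pos_left a hh
  have h2 : s'*b ≤ s'*(h*b) := Nat.mul_le_mul_left _ (Nat.le_mul_of_pos_left b hh)
  have h3 : h ≤ h*b := Nat.le_mul_of_pos_right h hb
  have he : (s'+1)*h*(a+b) = s'*(h*a) + s'*(h*b) + (h*a + h*b) := by ring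
  omega



/-- `A` is the kernel of a `q`-star (Δ-system of `q` sets with pairwise intersections `A`)
in the family `𝓕`. -/
def IsKernelOf (q : ℕ) (𝓕 : Finset (Finset ℕ)) (A : Finset ℕ) : Prop :=
  ∃ S ⊆ 𝓕, S.card = q ∧ ∀ P₁ ∈ S, ∀ P₂ ∈ S, P₁ ≠ P₂ → P₁ ∩ P₂ = A

/-- Lemma 3.1: if an `r`-graph `H` (with `r = a + b`) contains no bush `B_{s,h}(a,b)`, then
there do not exist pairwise disjoint sets `A₀, B₁,…,B_s` with `|A₀| = a`, `|Bᵢ| = b`, each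
`Bᵢ` a `(b, shr)`-kernel in `H`, and `A₀ ∪ Bᵢ ∈ H` for all `i`. -/
theorem no_kernel_star (a b s h r : ℕ) (ha : 0 < a) (hb : 0 < b) (hs : 0 < s) (hh : 0 < h)
    (hr : r = a + b)
    (H : Finset (Finset ℕ)) (hHcard : ∀ e ∈ H, e.card = r)
    (hbush : ¬ ContainsBush a b s h H) :
    ¬ ∃ (A0 : Finset ℕ) (B : Fin s → Finset ℕ),
        A0.card = a ∧ (∀ i, (B i).card = b) ∧
        (∀ i, Disjoint A0 (B i)) ∧
        (∀ i i', i ≠ i' → Disjoint (B i) (B i')) ∧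
        (∀ i, IsKernelOf (s * h * r) H (B i)) ∧
        (∀ i, A0 ∪ B i ∈ H) := by
  classical
  rintro ⟨A0, B, hA0, hBcard, hAB, hBB, hker, hmemAB⟩
  apply hbush
  choose S hSsub hScard hSker using hker
  have hq2 : 2 ≤ s * h * r := by
    have hr2 : 2 ≤ r := by omega
    have : r ≤ s * h * r := Nat.le_mul_of_pos_left r (Nat.mul_pos hs hh)
    omega
  have hBsub : ∀ i, ∀ e ∈ S i, B i ⊆ e := by
    intro i e he
    obtain ⟨e', he', hne⟩ := Finset.exists_mem_ne (by rw [hScard i]; omega) e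
    rw [← hSker i e' he' e he hne]
    exact Finset.inter_subset_right
  have hpart : ∀ i, ∀ e ∈ S i, (e \ B i).card = a := by
    intro i e he
    rw [Finset.card_sdiff_of_subset (hBsub i e he), hHcard e (hSsub i he), hBcard i]
    omega
  -- key induction
  have key : ∀ k, k ≤ s → ∃ P : Fin s → Fin h → Finset ℕ,
      (∀ i : Fin s, (i : ℕ) < k → ∀ j,
        (P i j).card = a ∧ B i ∪ P i j ∈ H ∧ Disjoint A0 (P i j) ∧
        (∀ i' : Fin s, Disjoint (B i') (P i j))) ∧
      (∀ (i i' : Fin s) (j j' : Fin h), (i : ℕ) < k → (i' : ℕ) < k →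
        (i, j) ≠ (i', j') → Disjoint (P i j) (P i' j')) := by
    intro k
    induction k with
    | zero => exact fun _ => ⟨fun _ _ => ∅, fun i hi => absurd hi (Nat.not_lt_zero _),
        fun i i' j j' hi => absurd hi (Nat.not_lt_zero _)⟩
    | succ k ih =>
      intro hk
      obtain ⟨P, hP1, hP2⟩ := ih (Nat.le_of_succ_le hk)
      set i₀ : Fin s := ⟨k, hk⟩ with hi₀
      set partsU : Finset ℕ :=
        (Finset.univ.filter fun i : Fin s => (i : ℕ) < k).biUnion
          (fun i => Finset.univ.biUnion (P i)) with hpartsU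
      set F : Finset ℕ := A0 ∪ Finset.univ.biUnion B ∪ partsU with hF
      -- card bound
      have hFcard : (F \ B i₀).card ≤ a + (s-1)*b + (s-1)*(h*a) := by
        have hsub : F \ B i₀ ⊆ A0 ∪ (Finset.univ.erase i₀).biUnion B ∪ partsU := by
          intro v hv
          rw [Finset.mem_sdiff, hF] at hv
          obtain ⟨hvF, hvnB⟩ := hv
          rw [Finset.mem_union, Finset.mem_union] at hvF
          rw [Finset.mem_union, Finset.mem_union]
          rcases hvF with (hv1 | hv2) | hv3
          · exact Or.inl (Or.inl hv1)
          · obtain ⟨i', _, hvB⟩ := Finset.mem_biUnion.mp hv2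
            refine Or.inl (Or.inr (Finset.mem_biUnion.mpr ⟨i', ?_, hvB⟩))
            refine Finset.mem_erase.mpr ⟨?_, Finset.mem_univ _⟩
            rintro rfl
            exact hvnB hvB
          · exact Or.inr hv3
        have h1 : ((Finset.univ.erase i₀).biUnion B).card ≤ (s-1)*b := by
          refine (Finset.card_biUnion_le).trans ?_
          rw [Finset.sum_congr rfl (fun i _ => hBcard i), Finset.sum_const,
            Finset.card_erase_of_mem (Finset.mem_univ _), Finset.card_univ, Fintype.card_fin,
            smul_eq_mul]
        have hfilt : (Finset.univ.filter fun i : Fin s => (i : ℕ) < k).card ≤ s - 1 := by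
          have hle : (Finset.univ.filter fun i : Fin s => (i : ℕ) < k).card
              ≤ (Finset.range k).card := by
            apply Finset.card_le_card_of_injOn (fun i : Fin s => (i : ℕ))
            · intro i hi
              simp only [Finset.mem_coe, Finset.mem_filter] at hi
              exact Finset.mem_range.mpr hi.2
            · intro i _ i' _ hii'
              exact Fin.ext hii'
          rw [Finset.card_range] at hle
          omega
        have h2 : partsU.card ≤ (s-1)*(h*a) := by
          rw [hpartsU]
          refine (Finset.card_biUnion_le).trans ?_
          have hin : ∀ i ∈ Finset.univ.filter fun i : Fin s => (i : ℕ) < k,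
              (Finset.univ.biUnion (P i)).card ≤ h*a := by
            intro i hi
            simp only [Finset.mem_filter] at hi
            refine (Finset.card_biUnion_le).trans ?_
            rw [Finset.sum_congr rfl (fun j _ => (hP1 i hi.2 j).1), Finset.sum_const,
              Finset.card_univ, Fintype.card_fin, smul_eq_mul]
          refine (Finset.sum_le_sum hin).trans ?_
          rw [Finset.sum_const, smul_eq_mul]
          exact Nat.mul_le_mul_right _ hfilt
        have hc1 := Finset.card_le_card hsub
        have hc2 := Finset.card_union_le (A0 ∪ (Finset.univ.erase i₀).biUnion B) partsU
        have hc3 := Finset.card_union_le A0 ((Finset.univ.erase i₀).biUnion B)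
        rw [hA0] at hc3
        linarith
      set good := (S i₀).filter fun e => Disjoint (e \ B i₀) F with hgood
      have hgoodcard : h ≤ good.card := by
        have hsum : good.card + ((S i₀).filter fun e => ¬ Disjoint (e \ B i₀) F).card
            = (S i₀).card := Finset.card_filter_add_card_filter_not _
        have hbadle := (bad_card_le (S i₀) (B i₀) F (hSker i₀)).trans hFcard
        have har : a + (s-1)*b + (s-1)*(h*a) + h ≤ s*h*r := by
          obtain ⟨s', rfl⟩ : ∃ s', s = s' + 1 := ⟨s - 1, by omega⟩
          simpa [hr, Nat.add_sub_cancel] using harith a b s' h hb hh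
        rw [hScard i₀] at hsum
        omega
      obtain ⟨T, hTsub, hTcard⟩ := Finset.exists_subset_card_eq hgoodcard
      set e : Fin h → Finset ℕ := fun j => ((T.equivFinOfCardEq hTcard).symm j : Finset ℕ)
        with he
      have hemem : ∀ j, e j ∈ T := fun j => ((T.equivFinOfCardEq hTcard).symm j).2
      have heinj : Function.Injective e := by
        intro j j' hjj'
        exact (T.equivFinOfCardEq hTcard).symm.injective (Subtype.ext hjj')
      have hegood : ∀ j, e j ∈ S i₀ ∧ Disjoint (e j \ B i₀) F := by
        intro j
        have := hTsub (hemem j)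
        simpa [hgood, Finset.mem_filter] using this
      set Q : Fin s → Fin h → Finset ℕ := fun i j => if i = i₀ then e j \ B i₀ else P i j
        with hQ
      have hsubA0 : A0 ⊆ F := by
        rw [hF]
        exact Finset.Subset.trans Finset.subset_union_left Finset.subset_union_left
      have hsubB : ∀ i' : Fin s, B i' ⊆ F := by
        intro i'
        rw [hF]
        exact Finset.Subset.trans
          (Finset.Subset.trans (Finset.subset_biUnion_of_mem B (Finset.mem_univ i'))
            Finset.subset_union_right)
          Finset.subset_union_left
      have hsubP : ∀ (i' : Fin s), (i' : ℕ) < k → ∀ j', P i' j' ⊆ F := by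
        intro i' hi' j'
        rw [hF]
        refine Finset.Subset.trans ?_ Finset.subset_union_right
        rw [hpartsU]
        intro v hv
        rw [Finset.mem_biUnion]
        exact ⟨i', Finset.mem_filter.mpr ⟨Finset.mem_univ _, hi'⟩,
          Finset.mem_biUnion.mpr ⟨j', Finset.mem_univ _, hv⟩⟩
      have hnewdisjP : ∀ (jj : Fin h) (i₂ : Fin s), (i₂ : ℕ) < k → ∀ j₂,
          Disjoint (e jj \ B i₀) (P i₂ j₂) :=
        fun jj i₂ hi₂ j₂ => (hegood jj).2.mono_right (hsubP i₂ hi₂ j₂)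
      have hnewnew : ∀ jj jj' : Fin h, jj ≠ jj' → Disjoint (e jj \ B i₀) (e jj' \ B i₀) := by
        intro jj jj' hne
        rw [Finset.disjoint_left]
        intro v hv hv'
        rw [Finset.mem_sdiff] at hv hv'
        have hvB : v ∈ B i₀ := by
          rw [← hSker i₀ (e jj) (hegood jj).1 (e jj') (hegood jj').1 (heinj.ne hne)]
          exact Finset.mem_inter.mpr ⟨hv.1, hv'.1⟩
        exact hv.2 hvB
      have hlt : ∀ i : Fin s, (i : ℕ) < k + 1 → i ≠ i₀ → (i : ℕ) < k := by
        intro i hi hne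
        have : (i : ℕ) ≠ k := fun hv => hne (Fin.ext hv)
        omega
      refine ⟨Q, ?_, ?_⟩
      · intro i hi j
        by_cases hik : i = i₀
        · subst hik
          have hQij : Q i₀ j = e j \ B i₀ := by simp [hQ]
          obtain ⟨heS, hedis⟩ := hegood j
          rw [hQij]
          refine ⟨hpart i₀ (e j) heS, ?_, (hedis.mono_right hsubA0).symm,
            fun i' => (hedis.mono_right (hsubB i')).symm⟩
          rw [Finset.union_sdiff_of_subset (hBsub i₀ (e j) heS)]
          exact hSsub i₀ heS
        · have hQij : Q i j = P i j := by simp [hQ, hik]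
          rw [hQij]
          exact hP1 i (hlt i hi hik) j
      · intro i i' j j' hi hi' hne
        by_cases hik : i = i₀ <;> by_cases hik' : i' = i₀
        · subst hik
          subst hik'
          have hjj' : j ≠ j' := by
            intro hjj
            exact hne (by rw [hjj])
          have hQ1 : Q i₀ j = e j \ B i₀ := by simp [hQ]
          have hQ2 : Q i₀ j' = e j' \ B i₀ := by simp [hQ]
          rw [hQ1, hQ2]
          exact hnewnew j j' hjj'
        · subst hik
          have hQ1 : Q i₀ j = e j \ B i₀ := by simp [hQ]
          have hQ2 : Q i' j' = P i' j' := by simp [hQ, hik']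
          rw [hQ1, hQ2]
          exact hnewdisjP j i' (hlt i' hi' hik') j'
        · subst hik'
          have hQ1 : Q i j = P i j := by simp [hQ, hik]
          have hQ2 : Q i₀ j' = e j' \ B i₀ := by simp [hQ]
          rw [hQ1, hQ2]
          exact (hnewdisjP j' i (hlt i hi hik) j).symm
        · have hQ1 : Q i j = P i j := by simp [hQ, hik]
          have hQ2 : Q i' j' = P i' j' := by simp [hQ, hik']
          rw [hQ1, hQ2]
          exact hP2 i i' j j' (hlt i hi hik) (hlt i' hi' hik') hne
  obtain ⟨P, hP1, hP2⟩ := key s le_rfl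
  refine ⟨A0, B, P, hA0, hBcard, ?_, hAB, ?_, hBB, ?_, ?_, hmemAB, ?_⟩
  · exact fun i j => (hP1 i i.2 j).1
  · exact fun i j => (hP1 i i.2 j).2.2.1
  · exact fun i j i' j' hne => hP2 i i' j j' i.2 i'.2 hne
  · exact fun i i' j => (hP1 i' i'.2 j).2.2.2 i
  · exact fun i j => (hP1 i i.2 j).2.1
end

section
/- Let a, b, s, h be positive integers with r = a + b. Let G be a nonempty family of r-element subsets of [n] that is r-partite with partition (X_1,…,X_r), and let J be a family of proper subsets of [r] such that for every F ∈ G and every A ∈ J, the set { x ∈ F : x ∈ X_i for some i ∈ A } is the kernel of an (s·h·r)-star in G. If G does not contain the bush B_{s,h}(a,b), then J does not contain two disjoint members A and B with |A| = a and |B| = b. -/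
lemma aux_select (S : Finset (Finset ℕ)) (K W : Finset ℕ) (m : ℕ)
    (hpair : ∀ T₁ ∈ S, ∀ T₂ ∈ S, T₁ ≠ T₂ → T₁ ∩ T₂ = K)
    (hm : m + W.card ≤ S.card) :
    ∃ S' ⊆ S, S'.card = m ∧ ∀ T ∈ S', Disjoint (T \ K) W := by
  classical
  have hbad : (S.filter fun T => ¬ Disjoint (T \ K) W).card ≤ W.card := by
    apply Finset.card_le_card_of_injOn
      (fun T => if hT : ((T \ K) ∩ W).Nonempty then hT.choose else 0)
    · intro T hT
      rw [Finset.mem_coe, Finset.mem_filter, Finset.not_disjoint_iff_nonempty_inter] at hT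
      beta_reduce
      rw [dif_pos hT.2]
      exact (Finset.mem_inter.mp hT.2.choose_spec).2
    · intro T₁ h₁ T₂ h₂ heq
      by_contra hne12
      simp only [Finset.coe_filter, Set.mem_setOf_eq] at h₁ h₂
      rw [Finset.not_disjoint_iff_nonempty_inter] at h₁ h₂
      simp only [] at heq
      rw [dif_pos h₁.2, dif_pos h₂.2] at heq
      have hx1 := h₁.2.choose_spec
      have hx2 := h₂.2.choose_spec
      rw [heq] at hx1
      simp only [Finset.mem_inter, Finset.mem_sdiff] at hx1 hx2
      have : h₂.2.choose ∈ T₁ ∩ T₂ := Finset.mem_inter.mpr ⟨hx1.1.1, hx2.1.1⟩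
      rw [hpair T₁ h₁.1 T₂ h₂.1 hne12] at this
      exact hx1.1.2 this
  have hgc : m ≤ (S.filter fun T => Disjoint (T \ K) W).card := by
    have := Finset.card_filter_add_card_filter_not
      (s := S) (p := fun T => Disjoint (T \ K) W)
    omega
  obtain ⟨S', hS'sub, hS'card⟩ := Finset.exists_subset_card_eq hgc
  refine ⟨S', hS'sub.trans (Finset.filter_subset _ _), hS'card, fun T hT => ?_⟩
  exact (Finset.mem_filter.mp (hS'sub hT)).2

/-- Lemma 3.2: let `G` be a nonempty `r`-partite family of `r`-subsets of `[n]` such that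
for every `F ∈ G` and every `A ∈ J` (a family of proper subsets of `[r]`), the part of `F`
lying in the parts indexed by `A` is the kernel of an `shr`-star in `G`. If `G` contains no
bush `B_{s,h}(a,b)`, then `J` has no two disjoint members of sizes `a` and `b`. -/
theorem no_disjoint_patterns (a b s h r n : ℕ) (ha : 0 < a) (hb : 0 < b) (hs : 0 < s)
    (hh : 0 < h) (hr : r = a + b)
    (G : Finset (Finset ℕ)) (hne : G.Nonempty)
    (hG : ∀ e ∈ G, e ⊆ Finset.Icc 1 n ∧ e.card = r)
    (X : Fin r → Finset ℕ) (hX : IsPartitionOf n r X)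
    (hpartite : ∀ e ∈ G, ∀ i, (e ∩ X i).card = 1)
    (J : Finset (Finset (Fin r))) (hproper : ∀ A ∈ J, A ⊂ Finset.univ)
    (hker : ∀ F ∈ G, ∀ A ∈ J,
      IsKernelOf (s * h * r) G (F.filter fun x => ∃ i ∈ A, x ∈ X i))
    (hbush : ¬ ContainsBush a b s h G) :
    ¬ ∃ A ∈ J, ∃ B ∈ J, Disjoint A B ∧ A.card = a ∧ B.card = b := by
  classical
  rintro ⟨A, hAJ, B, hBJ, hABd, hcA, hcB⟩
  apply hbush
  set q := s * h * r with hq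
  have hr2 : 2 ≤ r := by omega
  have hq2 : 2 ≤ q := by
    rw [hq]
    calc 2 ≤ r := hr2
      _ = 1 * 1 * r := by ring
      _ ≤ s * h * r := Nat.mul_le_mul (Nat.mul_le_mul hs hh) le_rfl
  have hsq : s ≤ q := by
    rw [hq]
    calc s = s * 1 * 1 := by ring
      _ ≤ s * h * r := Nat.mul_le_mul (Nat.mul_le_mul le_rfl hh) (by omega)
  have huniv : A ∪ B = (Finset.univ : Finset (Fin r)) := by
    apply Finset.eq_univ_of_card
    rw [Finset.card_union_of_disjoint hABd, hcA, hcB]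
    simp [hr]
  set tr : Finset (Fin r) → Finset ℕ → Finset ℕ :=
    fun C e => e.filter fun x => ∃ i ∈ C, x ∈ X i with htr
  set Ap := A.biUnion X with hAp
  set Bp := B.biUnion X with hBp
  have hApBp : Disjoint Ap Bp := by
    rw [Finset.disjoint_left]
    intro x hxA hxB
    simp only [hAp, hBp, Finset.mem_biUnion] at hxA hxB
    obtain ⟨k, hk, hxk⟩ := hxA
    obtain ⟨k', hk', hxk'⟩ := hxB
    have hkk' : k ≠ k' := fun he => (Finset.disjoint_left.mp hABd hk) (he ▸ hk')
    exact Finset.disjoint_left.mp (hX.1 k k' hkk') hxk hxk'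
  have htrsubA : ∀ e, tr A e ⊆ Ap := by
    intro e x hx
    simp only [htr, Finset.mem_filter] at hx
    obtain ⟨_, i, hi, hxi⟩ := hx
    exact Finset.mem_biUnion.mpr ⟨i, hi, hxi⟩
  have htrsubB : ∀ e, tr B e ⊆ Bp := by
    intro e x hx
    simp only [htr, Finset.mem_filter] at hx
    obtain ⟨_, i, hi, hxi⟩ := hx
    exact Finset.mem_biUnion.mpr ⟨i, hi, hxi⟩
  have htrsube : ∀ C e, tr C e ⊆ e := fun C e => Finset.filter_subset _ _
  have htrcard : ∀ e ∈ G, ∀ C : Finset (Fin r), (tr C e).card = C.card := by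
    intro e he C
    have heq : tr C e = C.biUnion fun k => e ∩ X k := by
      ext x
      simp only [htr, Finset.mem_filter, Finset.mem_biUnion, Finset.mem_inter]
      tauto
    rw [heq, Finset.card_biUnion]
    · simp [hpartite e he]
    · intro k _ k' _ hkk'
      exact (hX.1 k k' hkk').mono Finset.inter_subset_right Finset.inter_subset_right
  have hdecomp : ∀ e ∈ G, tr A e ∪ tr B e = e := by
    intro e he
    apply Finset.Subset.antisymm
    · exact Finset.union_subset (htrsube A e) (htrsube B e)
    · intro x hx
      have hxn : x ∈ Finset.univ.biUnion X := by rw [hX.2]; exact (hG e he).1 hx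
      obtain ⟨i, _, hxi⟩ := Finset.mem_biUnion.mp hxn
      have hiAB : i ∈ A ∪ B := by rw [huniv]; exact Finset.mem_univ i
      rcases Finset.mem_union.mp hiAB with hiA | hiB
      · exact Finset.mem_union_left _ (Finset.mem_filter.mpr ⟨hx, i, hiA, hxi⟩)
      · exact Finset.mem_union_right _ (Finset.mem_filter.mpr ⟨hx, i, hiB, hxi⟩)
  have htrdisj : ∀ e, Disjoint (tr A e) (tr B e) :=
    fun e => hApBp.mono (htrsubA e) (htrsubB e)
  have hsdiffA : ∀ e ∈ G, e \ tr A e = tr B e := by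
    intro e he
    have hd := hdecomp e he
    have hj := htrdisj e
    ext x
    simp only [Finset.mem_sdiff]
    constructor
    · rintro ⟨hxe, hxA⟩
      rw [← hd] at hxe
      rcases Finset.mem_union.mp hxe with hx | hx
      · exact absurd hx hxA
      · exact hx
    · intro hxB
      exact ⟨htrsube B e hxB, fun hxA => Finset.disjoint_left.mp hj hxA hxB⟩
  have hsdiffB : ∀ e ∈ G, e \ tr B e = tr A e := by
    intro e he
    have hd := hdecomp e he
    have hj := htrdisj e
    ext x
    simp only [Finset.mem_sdiff]
    constructor
    · rintro ⟨hxe, hxB⟩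
      rw [← hd] at hxe
      rcases Finset.mem_union.mp hxe with hx | hx
      · exact hx
      · exact absurd hx hxB
    · intro hxA
      exact ⟨htrsube A e hxA, fun hxB => Finset.disjoint_left.mp hj hxA hxB⟩
  have hKEA : ∀ (K : Finset ℕ), K ⊆ Ap → K.card = a → ∀ T ∈ G, K ⊆ T → tr A T = K := by
    intro K hKp hKc T hT hKT
    refine (Finset.eq_of_subset_of_card_le ?_ ?_).symm
    · intro x hx
      obtain ⟨i, hi, hxi⟩ := Finset.mem_biUnion.mp (hKp hx)
      exact Finset.mem_filter.mpr ⟨hKT hx, i, hi, hxi⟩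
    · rw [htrcard T hT A, hKc, hcA]
  have hKEB : ∀ (K : Finset ℕ), K ⊆ Bp → K.card = b → ∀ T ∈ G, K ⊆ T → tr B T = K := by
    intro K hKp hKc T hT hKT
    refine (Finset.eq_of_subset_of_card_le ?_ ?_).symm
    · intro x hx
      obtain ⟨i, hi, hxi⟩ := Finset.mem_biUnion.mp (hKp hx)
      exact Finset.mem_filter.mpr ⟨hKT hx, i, hi, hxi⟩
    · rw [htrcard T hT B, hKc, hcB]
  have hstar_sub : ∀ (K : Finset ℕ) (S : Finset (Finset ℕ)), S.card = q →
      (∀ T₁ ∈ S, ∀ T₂ ∈ S, T₁ ≠ T₂ → T₁ ∩ T₂ = K) → ∀ T ∈ S, K ⊆ T := by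
    intro K S hSc hSp T hT
    obtain ⟨T', hT', hTT'⟩ := Finset.exists_mem_ne (s := S)
      (by rw [hSc]; exact lt_of_lt_of_le one_lt_two hq2) T
    rw [← hSp T hT T' hT' hTT'.symm]
    exact Finset.inter_subset_left
  -- the root edge and kernel A₀
  obtain ⟨F, hF⟩ := hne
  set A₀ := tr A F with hA0
  have hA0ker : IsKernelOf q G A₀ := hker F hF A hAJ
  have hA0c : A₀.card = a := by rw [hA0, htrcard F hF A, hcA]
  have hA0p : A₀ ⊆ Ap := htrsubA F
  obtain ⟨S₀, hS₀G, hS₀c, hS₀p⟩ := hA0ker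
  obtain ⟨S₁, hS₁sub, hS₁c⟩ := Finset.exists_subset_card_eq (hsq.trans_eq hS₀c.symm)
  set En : ℕ → Finset ℕ := fun i =>
    if hi : i < s then (S₁.equivFin.symm (Fin.cast hS₁c.symm ⟨i, hi⟩) : Finset ℕ) else ∅
    with hEn
  have hEnS : ∀ i < s, En i ∈ S₀ := by
    intro i hi
    simp only [hEn, dif_pos hi]
    exact hS₁sub (S₁.equivFin.symm (Fin.cast hS₁c.symm ⟨i, hi⟩)).2
  have hEninj : ∀ i < s, ∀ i' < s, i ≠ i' → En i ≠ En i' := by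
    intro i hi i' hi' hii heq
    simp only [hEn, dif_pos hi, dif_pos hi'] at heq
    have h1 := S₁.equivFin.symm.injective (Subtype.ext heq)
    apply hii
    simpa [Fin.ext_iff] using h1
  have hEnG : ∀ i < s, En i ∈ G := fun i hi => hS₀G (hEnS i hi)
  have hA0En : ∀ i < s, A₀ ⊆ En i := fun i hi =>
    hstar_sub A₀ S₀ hS₀c hS₀p _ (hEnS i hi)
  have htrAEn : ∀ i < s, tr A (En i) = A₀ := fun i hi =>
    hKEA A₀ hA0p hA0c _ (hEnG i hi) (hA0En i hi)
  set Bn : ℕ → Finset ℕ := fun i => tr B (En i) with hBn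
  have hBnc : ∀ i < s, (Bn i).card = b := by
    intro i hi
    rw [hBn]
    simp only []
    rw [htrcard _ (hEnG i hi) B, hcB]
  have hBnp : ∀ i, Bn i ⊆ Bp := fun i => htrsubB (En i)
  have hBnker : ∀ i < s, IsKernelOf q G (Bn i) := fun i hi =>
    hker (En i) (hEnG i hi) B hBJ
  have hBnsd : ∀ i < s, Bn i = En i \ A₀ := by
    intro i hi
    rw [← htrAEn i hi]
    exact (hsdiffA _ (hEnG i hi)).symm
  have hABnE : ∀ i < s, A₀ ∪ Bn i = En i := by
    intro i hi
    rw [← htrAEn i hi]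
    exact hdecomp _ (hEnG i hi)
  have hBndisj : ∀ i < s, ∀ i' < s, i ≠ i' → Disjoint (Bn i) (Bn i') := by
    intro i hi i' hi' hii
    rw [Finset.disjoint_left]
    intro x hx hx'
    rw [hBnsd i hi] at hx
    rw [hBnsd i' hi'] at hx'
    rw [Finset.mem_sdiff] at hx hx'
    have hmem : x ∈ En i ∩ En i' := Finset.mem_inter.mpr ⟨hx.1, hx'.1⟩
    rw [hS₀p (En i) (hEnS i hi) (En i') (hEnS i' hi') (hEninj i hi i' hi' hii)] at hmem
    exact hx.2 hmem
  have hA0Bn : ∀ i, Disjoint A₀ (Bn i) := fun i => hApBp.mono hA0p (hBnp i)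
  -- main inductive construction of the tails
  have main : ∀ m, m ≤ s → ∃ P : ℕ → ℕ → Finset ℕ,
      (∀ i < m, ∀ j < h, (P i j).card = a ∧ P i j ⊆ Ap ∧ Disjoint A₀ (P i j) ∧
        Bn i ∪ P i j ∈ G) ∧
      (∀ i < m, ∀ i' < m, ∀ j < h, ∀ j' < h, ¬(i = i' ∧ j = j') →
        Disjoint (P i j) (P i' j')) := by
    intro m
    induction m with
    | zero => exact fun _ => ⟨fun _ _ => ∅, by omega, by omega⟩
    | succ m ih =>
      intro hm1
      obtain ⟨P, hP1, hP2⟩ := ih (by omega)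
      have hms : m < s := hm1
      obtain ⟨S, hSG, hSc, hSp⟩ := hBnker m hms
      set W := A₀ ∪ (Finset.range m).biUnion
        (fun i => (Finset.range h).biUnion (fun j => P i j)) with hW
      have hWc : W.card ≤ a + m * (h * a) := by
        refine le_trans (Finset.card_union_le _ _) (add_le_add (le_of_eq hA0c) ?_)
        refine le_trans (Finset.card_biUnion_le) ?_
        calc ∑ i ∈ Finset.range m, ((Finset.range h).biUnion (fun j => P i j)).card
            ≤ ∑ i ∈ Finset.range m, (h * a) := by
              apply Finset.sum_le_sum
              intro i hi
              rw [Finset.mem_range] at hi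
              refine le_trans (Finset.card_biUnion_le) ?_
              calc ∑ j ∈ Finset.range h, (P i j).card
                  ≤ ∑ j ∈ Finset.range h, a := by
                    apply Finset.sum_le_sum
                    intro j hj
                    rw [Finset.mem_range] at hj
                    exact le_of_eq (hP1 i (by omega) j hj).1
                _ = h * a := by rw [Finset.sum_const, Finset.card_range, smul_eq_mul]
          _ = m * (h * a) := by rw [Finset.sum_const, Finset.card_range, smul_eq_mul]
      have hWq : h + W.card ≤ q := by
        have t1 : (m + 1) * (h * a) ≤ s * (h * a) := Nat.mul_le_mul_right _ hm1
        have t2 : a ≤ h * a := Nat.le_mul_of_pos_left a hh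
        have t3 : h ≤ s * h := Nat.le_mul_of_pos_left h hs
        have t4 : s * h ≤ s * h * b := Nat.le_mul_of_pos_right _ hb
        have e1 : a + m * (h * a) ≤ s * h * a := by nlinarith [mul_assoc s h a]
        have e2 : h ≤ s * h * b := t3.trans t4
        have h1 : h + (a + m * (h * a)) ≤ s * h * r := by
          rw [hr, Nat.mul_add]
          omega
        rw [hq]
        linarith
      obtain ⟨S', hS'S, hS'c, hS'disj⟩ := aux_select S (Bn m) W h hSp
        (by rw [hSc]; exact hWq)
      set Tn : ℕ → Finset ℕ := fun j =>
        if hj : j < h then (S'.equivFin.symm (Fin.cast hS'c.symm ⟨j, hj⟩) : Finset ℕ) else ∅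
        with hTn
      have hTnS : ∀ j < h, Tn j ∈ S := by
        intro j hj
        simp only [hTn, dif_pos hj]
        exact hS'S (S'.equivFin.symm (Fin.cast hS'c.symm ⟨j, hj⟩)).2
      have hTnS' : ∀ j < h, Tn j ∈ S' := by
        intro j hj
        simp only [hTn, dif_pos hj]
        exact (S'.equivFin.symm (Fin.cast hS'c.symm ⟨j, hj⟩)).2
      have hTninj : ∀ j < h, ∀ j' < h, j ≠ j' → Tn j ≠ Tn j' := by
        intro j hj j' hj' hjj heq
        simp only [hTn, dif_pos hj, dif_pos hj'] at heq
        have h1 := S'.equivFin.symm.injective (Subtype.ext heq)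
        apply hjj
        simpa [Fin.ext_iff] using h1
      have hTnG : ∀ j < h, Tn j ∈ G := fun j hj => hSG (hTnS j hj)
      have hBnTn : ∀ j < h, Bn m ⊆ Tn j := fun j hj =>
        hstar_sub (Bn m) S hSc hSp _ (hTnS j hj)
      have htrBTn : ∀ j < h, tr B (Tn j) = Bn m := fun j hj =>
        hKEB (Bn m) (hBnp m) (hBnc m hms) _ (hTnG j hj) (hBnTn j hj)
      have htail : ∀ j < h, Tn j \ Bn m = tr A (Tn j) := by
        intro j hj
        rw [← htrBTn j hj]
        exact hsdiffB _ (hTnG j hj)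
      set P' : ℕ → ℕ → Finset ℕ := fun i j => if i = m then Tn j \ Bn m else P i j with hP'
      have hP'W : ∀ j < h, Disjoint (Tn j \ Bn m) W := fun j hj =>
        hS'disj _ (hTnS' j hj)
      refine ⟨P', ?_, ?_⟩
      · intro i hi j hj
        by_cases him : i = m
        · subst him
          simp only [hP', if_pos rfl]
          refine ⟨?_, ?_, ?_, ?_⟩
          · rw [htail j hj, htrcard _ (hTnG j hj) A, hcA]
          · rw [htail j hj]; exact htrsubA _
          · refine ((hP'W j hj).mono_right ?_).symm
            rw [hW]
            exact Finset.subset_union_left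
          · rw [Finset.union_sdiff_of_subset (hBnTn j hj)]
            exact hTnG j hj
        · simp only [hP', if_neg him]
          exact hP1 i (by omega) j hj
      · intro i hi i' hi' j hj j' hj' hne
        have hsubW : ∀ i₀ < m, ∀ j₀ < h, P i₀ j₀ ⊆ W := by
          intro i₀ hi₀ j₀ hj₀ x hx
          rw [hW]
          exact Finset.mem_union_right _ (Finset.mem_biUnion.mpr ⟨i₀,
            Finset.mem_range.mpr hi₀,
            Finset.mem_biUnion.mpr ⟨j₀, Finset.mem_range.mpr hj₀, hx⟩⟩)
        by_cases him : i = m <;> by_cases him' : i' = m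
        · subst him; subst him'
          simp only [hP', if_pos rfl]
          have hjj : j ≠ j' := by tauto
          rw [Finset.disjoint_left]
          intro x hx hx'
          rw [Finset.mem_sdiff] at hx hx'
          have hmem : x ∈ Tn j ∩ Tn j' := Finset.mem_inter.mpr ⟨hx.1, hx'.1⟩
          rw [hSp _ (hTnS j hj) _ (hTnS j' hj') (hTninj j hj j' hj' hjj)] at hmem
          exact hx.2 hmem
        · subst him
          simp only [hP', if_pos rfl, if_neg him']
          exact (hP'W j hj).mono_right (hsubW i' (by omega) j' hj')
        · subst him'
          simp only [hP', if_pos rfl, if_neg him]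
          exact ((hP'W j' hj').mono_right (hsubW i (by omega) j hj)).symm
        · simp only [hP', if_neg him, if_neg him']
          exact hP2 i (by omega) i' (by omega) j hj j' hj' hne
  obtain ⟨P, hP1, hP2⟩ := main s le_rfl
  refine ⟨A₀, fun i => Bn i, fun i j => P i j, hA0c, ?_, ?_, ?_, ?_, ?_, ?_, ?_, ?_, ?_⟩
  · exact fun i => hBnc i i.isLt
  · exact fun i j => (hP1 i i.isLt j j.isLt).1
  · exact fun i => hA0Bn i
  · exact fun i j => (hP1 i i.isLt j j.isLt).2.2.1
  · intro i i' hii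
    exact hBndisj i i.isLt i' i'.isLt (fun hv => hii (Fin.val_injective hv))
  · intro i j i' j' hne
    refine hP2 i i.isLt i' i'.isLt j j.isLt j' j'.isLt ?_
    rintro ⟨h1, h2⟩
    exact hne (by simp [Prod.ext_iff, Fin.ext_iff, h1, h2])
  · intro i i' j
    exact (hApBp.mono (hP1 i' i'.isLt j j.isLt).2.1 (hBnp i)).symm
  · intro i
    rw [hABnE i i.isLt]
    exact hEnG i i.isLt
  · exact fun i j => (hP1 i i.isLt j j.isLt).2.2.2
end

section
/- Let a + b = r. (i) If 2 ≤ a, b ≤ r − 2, then for each k with 0 ≤ k ≤ r − 2 and for k = r, the family J^(k) contains two disjoint members A and B with |A| = a and |B| = b, unless (r, a, b, k) = (4, 2, 2, 1). (ii) If (a, b) = (1, r−1) or (a, b) = (r−1, 1) and r ≥ 3, then for each k with 1 ≤ k ≤ r − 2 and for k = r, the family J^(k) contains two disjoint members A and B with |A| = a and |B| = b. -/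
open Finset

namespace JkAux

variable {r k : ℕ} {A B g : Finset (Fin r)}

lemma gen_mem (h : g ∈ JkGens r k) : g ∈ Jk r k := by
  simp only [Jk, mem_image, mem_filter, mem_powerset]
  exact ⟨{g}, ⟨by simpa using h, singleton_nonempty g⟩, by simp⟩

lemma inter_mem (hA : A ∈ Jk r k) (hB : B ∈ Jk r k) : A ∩ B ∈ Jk r k := by
  simp only [Jk, mem_image, mem_filter, mem_powerset] at *
  obtain ⟨G, ⟨hG, hGne⟩, rfl⟩ := hA
  obtain ⟨H, ⟨hH, hHne⟩, rfl⟩ := hB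
  exact ⟨G ∪ H, ⟨union_subset hG hH, hGne.mono subset_union_left⟩,
    by rw [inf_union]; rfl⟩

lemma erase_mem (i : Fin r) (hi : (i : ℕ) < k) : Finset.univ.erase i ∈ Jk r k := by
  apply gen_mem
  simp only [JkGens, mem_union, mem_image, mem_filter, mem_univ, true_and]
  exact Or.inl ⟨i, hi, rfl⟩

lemma pair_mem (d d' : Fin r) (hdd : d ≠ d') (hd : ¬ (d : ℕ) < k) (hd' : ¬ (d' : ℕ) < k) :
    Finset.univ \ {d, d'} ∈ Jk r k := by
  apply gen_mem
  simp only [JkGens, mem_union, mem_filter, mem_powersetCard]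
  refine Or.inr ⟨⟨sdiff_subset, ?_⟩, ?_⟩
  · rw [card_sdiff_of_subset (subset_univ _), card_univ, Fintype.card_fin, card_pair hdd]
  · intro i hik
    simp only [mem_sdiff, mem_univ, mem_insert, mem_singleton, true_and]
    push_neg
    constructor <;> rintro rfl <;> [exact hd hik; exact hd' hik]

lemma sdiff_T_mem {T : Finset (Fin r)} (hT : ∀ i ∈ T, (i : ℕ) < k) (hne : T.Nonempty) :
    Finset.univ \ T ∈ Jk r k := by
  refine Finset.Nonempty.cons_induction
    (motive := fun (T : Finset (Fin r)) _ => (∀ i ∈ T, (i : ℕ) < k) → Finset.univ \ T ∈ Jk r k) ?_ ?_ hne hT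
  · intro i hi
    simpa [← sdiff_singleton_eq_erase] using erase_mem i (hi i (by simp))
  · intro a s ha hs ih hk'
    have : Finset.univ \ (cons a s ha) = (Finset.univ.erase a) ∩ (Finset.univ \ s) := by
      ext x; simp [Finset.mem_erase] <;> tauto
    rw [this]
    exact inter_mem (erase_mem a (hk' a (by simp))) (ih (fun i hi => hk' i (by simp [hi])))

lemma sdiff_D_mem {D : Finset (Fin r)} (hD : ∀ i ∈ D, ¬ (i : ℕ) < k) (hcard : 2 ≤ D.card) :
    Finset.univ \ D ∈ Jk r k := by
  obtain ⟨d0, hd0⟩ := card_pos.mp (show 0 < D.card by omega)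
  have hD' : (D.erase d0).Nonempty := by
    rw [← card_pos, card_erase_of_mem hd0]; omega
  have hsub : ∀ i ∈ D.erase d0, ¬ (i : ℕ) < k := fun i hi => hD i (mem_of_mem_erase hi)
  have hd0k := hD d0 hd0
  have hkey : ∀ D' : Finset (Fin r), (hne : D'.Nonempty) → d0 ∉ D' → (∀ i ∈ D', ¬ (i : ℕ) < k) →
      Finset.univ \ insert d0 D' ∈ Jk r k := by
    intro D' hne
    refine Finset.Nonempty.cons_induction
      (motive := fun (D' : Finset (Fin r)) _ => d0 ∉ D' → (∀ i ∈ D', ¬ (i : ℕ) < k) →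
        Finset.univ \ insert d0 D' ∈ Jk r k) ?_ ?_ hne
    · intro d hd0d hdk
      have : (insert d0 {d} : Finset (Fin r)) = {d0, d} := rfl
      rw [this]
      exact pair_mem d0 d (by simpa using hd0d) hd0k (hdk d (by simp))
    · intro a s ha hs ih hd0 hk'
      have hd0s : d0 ∉ s := fun h => hd0 (by simp [h])
      have : Finset.univ \ insert d0 (cons a s ha) =
          (Finset.univ \ insert d0 s) ∩ (Finset.univ \ {d0, a}) := by
        ext x; simp; tauto
      rw [this]
      refine inter_mem (ih hd0s (fun i hi => hk' i (by simp [hi]))) ?_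
      exact pair_mem d0 a (fun h => hd0 (by simp [h])) hd0k (hk' a (by simp))
  have : D = insert d0 (D.erase d0) := (insert_erase hd0).symm
  rw [this]
  exact hkey _ hD' (notMem_erase _ _) hsub

lemma sdiff_mem {T D : Finset (Fin r)} (hT : ∀ i ∈ T, (i : ℕ) < k)
    (hD : ∀ i ∈ D, ¬ (i : ℕ) < k) (hne : (T ∪ D).Nonempty) (hcard : D.card ≠ 1) :
    Finset.univ \ (T ∪ D) ∈ Jk r k := by
  rcases Nat.lt_or_ge D.card 2 with h2 | h2
  · have hDe : D = ∅ := by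
      rw [← card_eq_zero]; omega
    subst hDe
    rw [union_empty] at hne ⊢
    exact sdiff_T_mem hT hne
  · rcases T.eq_empty_or_nonempty with rfl | hTne
    · rw [empty_union]; exact sdiff_D_mem hD h2
    · rw [sdiff_union_distrib]
      have := inter_mem (sdiff_T_mem hT hTne) (sdiff_D_mem hD h2)
      simpa [inf_eq_inter] using this

end JkAux

lemma key (r k a x : ℕ) (hx1 : x ≠ 1) (hx2 : (r - min k r) - x ≠ 1)
    (hxm : x ≤ r - min k r) (hxa : x ≤ a) (hax : a - x ≤ min k r)
    (ha : 1 ≤ a) (hb : a ≤ r - 1) :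
    ∃ A ∈ Jk r k, ∃ B ∈ Jk r k, Disjoint A B ∧ A.card = a ∧ B.card = r - a := by
  classical
  set F : Finset (Fin r) := Finset.univ.filter (fun i => (i : ℕ) < k) with hF
  have himg : F.image Fin.val = Finset.range (min k r) := by
    ext n
    simp only [hF, mem_image, mem_filter, mem_univ, true_and, mem_range, lt_min_iff]
    constructor
    · rintro ⟨i, hik, rfl⟩; exact ⟨hik, i.isLt⟩
    · rintro ⟨h1, h2⟩; exact ⟨⟨n, h2⟩, h1, rfl⟩
  have hcF : F.card = min k r := by
    rw [← Finset.card_range (min k r), ← himg,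
      Finset.card_image_of_injective _ Fin.val_injective]
  have hcFc : (Finset.univ \ F).card = r - min k r := by
    rw [card_sdiff_of_subset (subset_univ _), card_univ, Fintype.card_fin, hcF]
  obtain ⟨S1, hS1sub, hS1card⟩ := Finset.exists_subset_card_eq (s := F) (n := a - x) (by omega)
  obtain ⟨S2, hS2sub, hS2card⟩ := Finset.exists_subset_card_eq (s := Finset.univ \ F) (n := x) (by omega)
  have hS1k : ∀ i ∈ S1, (i : ℕ) < k := fun i hi => (mem_filter.mp (hS1sub hi)).2
  have hS2k : ∀ i ∈ S2, ¬ (i : ℕ) < k := by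
    intro i hi h
    exact (mem_sdiff.mp (hS2sub hi)).2 (mem_filter.mpr ⟨mem_univ i, h⟩)
  have hdis : Disjoint S1 S2 := by
    rw [disjoint_left]
    intro i h1 h2
    exact hS2k i h2 (hS1k i h1)
  have hAeq : S1 ∪ S2 = Finset.univ \ ((F \ S1) ∪ ((Finset.univ \ F) \ S2)) := by
    ext y
    simp only [mem_union, mem_sdiff, mem_univ, true_and, not_or, not_and, not_not]
    by_cases hy : y ∈ F
    · have h2 : y ∉ S2 := fun h => (mem_sdiff.mp (hS2sub h)).2 hy
      tauto
    · have h1 : y ∉ S1 := fun h => hy (hS1sub h)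
      tauto
  have hcT : (F \ S1).card = min k r - (a - x) := by
    rw [card_sdiff_of_subset hS1sub, hcF, hS1card]
  have hcD : ((Finset.univ \ F) \ S2).card = (r - min k r) - x := by
    rw [card_sdiff_of_subset hS2sub, hcFc, hS2card]
  have hdisTD : Disjoint (F \ S1) ((Finset.univ \ F) \ S2) := by
    rw [disjoint_left]
    intro y h1 h2
    exact (mem_sdiff.mp (mem_sdiff.mp h2).1).2 (mem_sdiff.mp h1).1
  have hne1 : ((F \ S1) ∪ ((Finset.univ \ F) \ S2)).Nonempty := by
    rw [← card_pos, card_union_of_disjoint hdisTD, hcT, hcD]; omega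
  have hAmem : S1 ∪ S2 ∈ Jk r k := by
    rw [hAeq]
    refine JkAux.sdiff_mem (fun i hi => (mem_filter.mp (mem_sdiff.mp hi).1).2) ?_ hne1
      (by rw [hcD]; exact hx2)
    intro i hi h
    exact (mem_sdiff.mp (mem_sdiff.mp hi).1).2 (mem_filter.mpr ⟨mem_univ i, h⟩)
  have hAcard : (S1 ∪ S2).card = a := by
    rw [card_union_of_disjoint hdis, hS1card, hS2card]; omega
  have hBmem : Finset.univ \ (S1 ∪ S2) ∈ Jk r k := by
    refine JkAux.sdiff_mem hS1k hS2k ?_ (by rw [hS2card]; exact hx1)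
    rw [← card_pos, hAcard]; omega
  refine ⟨S1 ∪ S2, hAmem, Finset.univ \ (S1 ∪ S2), hBmem, sdiff_disjoint.symm, hAcard, ?_⟩
  rw [card_sdiff_of_subset (subset_univ _), card_univ, Fintype.card_fin, hAcard]

/-- Lemma 3.3: (i) if `2 ≤ a, b ≤ r - 2` (`a + b = r`), then for every `k` with `k ≤ r - 2`
or `k = r`, the family `J^(k)` has disjoint members of sizes `a` and `b` unless
`(r,a,b,k) = (4,2,2,1)`; (ii) if `(a,b) = (1,r-1)` or `(r-1,1)` and `r ≥ 3`, the same holds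
for every `k` with `1 ≤ k ≤ r - 2` or `k = r`. -/
theorem Jk_disjoint_members (a b r : ℕ) (hr : r = a + b) :
    ((2 ≤ a ∧ 2 ≤ b ∧ a ≤ r - 2 ∧ b ≤ r - 2) →
      ∀ k : ℕ, (k ≤ r - 2 ∨ k = r) → ¬ (r = 4 ∧ a = 2 ∧ b = 2 ∧ k = 1) →
        ∃ A ∈ Jk r k, ∃ B ∈ Jk r k, Disjoint A B ∧ A.card = a ∧ B.card = b) ∧
    ((((a = 1 ∧ b = r - 1) ∨ (a = r - 1 ∧ b = 1)) ∧ 3 ≤ r) →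
      ∀ k : ℕ, 1 ≤ k → (k ≤ r - 2 ∨ k = r) →
        ∃ A ∈ Jk r k, ∃ B ∈ Jk r k, Disjoint A B ∧ A.card = a ∧ B.card = b) := by
  constructor
  · rintro ⟨ha2, hb2, har, hbr⟩ k hk hexc
    have hr4 : 4 ≤ r := by omega
    have hex : ∃ x, x ≠ 1 ∧ (r - min k r) - x ≠ 1 ∧ x ≤ r - min k r ∧ x ≤ a ∧
        a - x ≤ min k r := by
      rcases hk with hk | hk
      · have hmin : min k r = k := by omega
        rw [hmin]
        by_cases h1 : r - k < a
        · exact ⟨r - k, by omega, by omega, by omega, by omega, by omega⟩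
        · by_cases h2 : a = r - k - 1
          · by_cases h3 : a = 2
            · exact ⟨0, by omega, by omega, by omega, by omega, by omega⟩
            · exact ⟨a - 1, by omega, by omega, by omega, by omega, by omega⟩
          · exact ⟨a, by omega, by omega, by omega, by omega, by omega⟩
      · have hmin : min k r = r := by omega
        rw [hmin]
        exact ⟨0, by omega, by omega, by omega, by omega, by omega⟩
    obtain ⟨x, h1, h2, h3, h4, h5⟩ := hex
    obtain ⟨A, hA, B, hB, hd, hca, hcb⟩ :=
      key r k a x h1 h2 h3 h4 h5 (by omega) (by omega)
    exact ⟨A, hA, B, hB, hd, hca, by omega⟩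
  · rintro ⟨hab, hr3⟩ k hk1 hk
    have hex : ∃ x, x ≠ 1 ∧ (r - min k r) - x ≠ 1 ∧ x ≤ r - min k r ∧ x ≤ a ∧
        a - x ≤ min k r := by
      rcases hab with ⟨rfl, hb1⟩ | ⟨ha1, hb1⟩
      · exact ⟨0, by omega, by omega, by omega, by omega, by omega⟩
      · exact ⟨r - min k r, by omega, by omega, by omega, by omega, by omega⟩
    obtain ⟨x, h1, h2, h3, h4, h5⟩ := hex
    obtain ⟨A, hA, B, hB, hd, hca, hcb⟩ :=
      key r k a x h1 h2 h3 h4 h5 (by omega) (by omega)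
    exact ⟨A, hA, B, hB, hd, hca, by omega⟩
end

section
/- Let a, b ≥ 2 with r = a + b ≥ 5, and let s, h be positive integers. Let H be an r-graph on [n] containing no bush B_{s,h}(a,b). Suppose H_1,…,H_m are pairwise disjoint subfamilies of H such that for each i: H_i is r-partite with some partition (X_1^i,…,X_r^i) of [n]; there is a family J_i of proper subsets of [r] with Π_i(I(E, H_i)) = J_i for every E ∈ H_i; J_i is closed under intersection and contains the set [r]\{j} for every 1 ≤ j ≤ r − 1; and for every E ∈ H_i and every P ∈ J_i, the subset of E consisting of its vertices in the parts X_j^i with j ∈ P is the kernel of an (s·h·r)-star in H_i. For E ∈ H_i let c(E) denote the unique vertex of E lying in X_r^i. Then for every set Y ⊆ [n] with a ≤ |Y| ≤ r − 1, the number of vertices v ∈ [n] \ Y for which there exist an index i and an edge E ∈ H_i with Y ⊆ E and c(E) = v is at most s − 1. -/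
section Aux
open Finset

lemma bad_count (C : Finset (Finset ℕ)) (U : Finset ℕ)
    (hd : ∀ P ∈ C, ∀ Q ∈ C, P ≠ Q → Disjoint P Q) :
    #(C.filter fun P => ¬ Disjoint P U) ≤ #U := by
  classical
  apply Finset.card_le_card_of_injOn (fun P => if h : (P ∩ U).Nonempty then h.choose else 0)
  · intro P hP
    simp only [coe_filter, Set.mem_setOf_eq] at hP
    have h : (P ∩ U).Nonempty := Finset.not_disjoint_iff_nonempty_inter.mp hP.2
    simp only [dif_pos h]
    exact (Finset.mem_inter.mp h.choose_spec).2
  · intro P hP Q hQ hEq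
    simp only [coe_filter, Set.mem_setOf_eq] at hP hQ
    have hP2 : (P ∩ U).Nonempty := Finset.not_disjoint_iff_nonempty_inter.mp hP.2
    have hQ2 : (Q ∩ U).Nonempty := Finset.not_disjoint_iff_nonempty_inter.mp hQ.2
    dsimp only at hEq
    rw [dif_pos hP2, dif_pos hQ2] at hEq
    by_contra hne
    have hdj := hd P hP.1 Q hQ.1 hne
    have h1 := (Finset.mem_inter.mp hP2.choose_spec).1
    have h2 := (Finset.mem_inter.mp hQ2.choose_spec).1
    rw [hEq] at h1
    exact (Finset.disjoint_left.mp hdj h1) h2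

lemma exists_good (C : Finset (Finset ℕ)) (U : Finset ℕ)
    (hd : ∀ P ∈ C, ∀ Q ∈ C, P ≠ Q → Disjoint P Q)
    (hlt : #U < #C) : ∃ P ∈ C, Disjoint P U := by
  classical
  by_contra hcon
  push_neg at hcon
  have hsub : C ⊆ C.filter fun P => ¬ Disjoint P U :=
    fun P hP => mem_filter.mpr ⟨hP, hcon P hP⟩
  have := (Finset.card_le_card hsub).trans (bad_count C U hd)
  omega

lemma select {ι : Type*} [DecidableEq ι] (M : ℕ)
    (C : ι → Finset (Finset ℕ)) (W : ι → Finset ℕ) (T : Finset ι)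
    (hd : ∀ t, ∀ P ∈ C t, ∀ Q ∈ C t, P ≠ Q → Disjoint P Q)
    (hM : ∀ t, ∀ P ∈ C t, #P ≤ M)
    (hcard : ∀ t, #(W t) + (#T - 1) * M < #(C t)) :
    ∃ f : ι → Finset ℕ, (∀ t ∈ T, f t ∈ C t) ∧ (∀ t ∈ T, Disjoint (f t) (W t)) ∧
      ∀ t ∈ T, ∀ t' ∈ T, t ≠ t' → Disjoint (f t) (f t') := by
  classical
  induction T using Finset.induction with
  | empty => exact ⟨fun _ => ∅, by simp, by simp, by simp⟩
  | @insert a T ha ih =>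
    obtain ⟨f, hf1, hf2, hf3⟩ := ih (fun t => by
      have := hcard t
      have h2 : (#T - 1) * M ≤ (#(insert a T) - 1) * M :=
        Nat.mul_le_mul_right _ (by have := Finset.card_insert_of_notMem ha; omega)
      omega)
    have hUcard : #(W a ∪ T.biUnion f) ≤ #(W a) + #T * M := by
      calc #(W a ∪ T.biUnion f) ≤ #(W a) + #(T.biUnion f) := Finset.card_union_le _ _
        _ ≤ #(W a) + ∑ t ∈ T, #(f t) :=
            Nat.add_le_add_left Finset.card_biUnion_le _
        _ ≤ #(W a) + #T * M := by
            have := Finset.sum_le_card_nsmul T (fun t => #(f t)) M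
              (fun t ht => hM t _ (hf1 t ht))
            simp only [smul_eq_mul] at this
            omega
    obtain ⟨P, hPC, hPdisj⟩ := exists_good (C a) (W a ∪ T.biUnion f) (hd a) (by
      have h3 := hcard a
      have hins : #(insert a T) - 1 = #T := by
        have := Finset.card_insert_of_notMem ha; omega
      rw [hins] at h3
      omega)
    refine ⟨Function.update f a P, ?_, ?_, ?_⟩
    · intro t ht
      rcases Finset.mem_insert.mp ht with rfl | htT
      · rw [Function.update_self]; exact hPC
      · rw [Function.update_of_ne (show _ ≠ _ by intro hEq; subst hEq; exact ha htT)]; exact hf1 t htT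
    · intro t ht
      rcases Finset.mem_insert.mp ht with rfl | htT
      · rw [Function.update_self]
        exact hPdisj.mono_right Finset.subset_union_left
      · rw [Function.update_of_ne (show _ ≠ _ by intro hEq; subst hEq; exact ha htT)]; exact hf2 t htT
    · intro t ht t' ht' htt'
      rcases Finset.mem_insert.mp ht with rfl | htT
      · rw [Function.update_self]
        rcases Finset.mem_insert.mp ht' with rfl | htT'
        · exact absurd rfl htt'
        · rw [Function.update_of_ne (show _ ≠ _ by intro hEq; subst hEq; exact ha htT')]
          exact hPdisj.mono_right ((Finset.subset_biUnion_of_mem f htT').trans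
            Finset.subset_union_right)
      · rw [Function.update_of_ne (show _ ≠ _ by intro hEq; subst hEq; exact ha htT)]
        rcases Finset.mem_insert.mp ht' with rfl | htT'
        · rw [Function.update_self]
          exact (hPdisj.mono_right ((Finset.subset_biUnion_of_mem f htT).trans
            Finset.subset_union_right)).symm
        · rw [Function.update_of_ne (show _ ≠ _ by intro hEq; subst hEq; exact ha htT')]
          exact hf3 t htT t' htT' htt'

lemma mem_J_of {r : ℕ} (hrpos : 0 < r) (Ji : Finset (Finset (Fin r)))
    (hinter : ∀ A ∈ Ji, ∀ B ∈ Ji, A ∩ B ∈ Ji)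
    (hbig : ∀ j : Fin r, (j : ℕ) < r - 1 → Finset.univ.erase j ∈ Ji)
    (P : Finset (Fin r)) (hlast : (⟨r - 1, by omega⟩ : Fin r) ∈ P) (hne : P ≠ univ) :
    P ∈ Ji := by
  classical
  suffices h : ∀ k (P : Finset (Fin r)), #(univ \ P) ≤ k →
      (⟨r - 1, by omega⟩ : Fin r) ∈ P → P ≠ univ → P ∈ Ji from
    h r P (le_trans (card_le_card (subset_univ _)) (by simp)) hlast hne
  intro k
  induction k with
  | zero =>
    intro P hle hl hne
    exfalso
    apply hne
    have : univ \ P = ∅ := card_eq_zero.mp (Nat.le_zero.mp hle)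
    have := sdiff_eq_empty_iff_subset.mp this
    exact (eq_univ_iff_forall.mpr fun x => this (mem_univ x))
  | succ k ih =>
    intro P hle hl hne
    have hcne : (univ \ P).Nonempty := by
      rw [← card_pos]
      by_contra hc
      push_neg at hc
      exact hne (eq_univ_iff_forall.mpr fun x =>
        sdiff_eq_empty_iff_subset.mp (card_eq_zero.mp (Nat.le_zero.mp hc)) (mem_univ x))
    obtain ⟨j, hj⟩ := hcne
    have hjP : j ∉ P := (mem_sdiff.mp hj).2
    have hjlt : (j : ℕ) < r - 1 := by
      have : j ≠ (⟨r - 1, by omega⟩ : Fin r) := fun hEq => hjP (hEq ▸ hl)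
      have h2 : (j : ℕ) ≠ r - 1 := fun hv => this (Fin.ext hv)
      have := j.isLt
      omega
    by_cases hPe : P = univ.erase j
    · exact hPe ▸ hbig j hjlt
    · have hP' : insert j P ∈ Ji := by
        apply ih
        · have : univ \ insert j P = (univ \ P).erase j := by
            ext x; simp [mem_sdiff, mem_erase, mem_insert, not_or, and_comm]
          rw [this, card_erase_of_mem hj]
          omega
        · exact mem_insert_of_mem hl
        · intro hu
          apply hPe
          have : univ.erase j = (insert j P).erase j := by rw [hu]
          rw [erase_insert hjP] at this
          exact this.symm
      have hPeq : P = insert j P ∩ univ.erase j := by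
        ext x
        simp only [mem_inter, mem_insert, mem_erase, mem_univ, and_true]
        constructor
        · intro hx
          exact ⟨Or.inr hx, fun hEq => hjP (hEq ▸ hx)⟩
        · rintro ⟨(rfl | hx), hne2⟩
          · exact absurd rfl hne2
          · exact hx
      rw [hPeq]
      exact hinter _ hP' _ (hbig j hjlt)


lemma filter_pattern_eq {r n : ℕ} (X : Fin r → Finset ℕ)
    (hXc : Finset.univ.biUnion X = Finset.Icc 1 n)
    (e : Finset ℕ) (he : e ⊆ Finset.Icc 1 n)
    (hp : ∀ j, #(e ∩ X j) = 1)
    (S : Finset ℕ) (hS : S ⊆ e) :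
    (e.filter fun x => ∃ j ∈ pattern X S, x ∈ X j) = S := by
  classical
  ext x
  simp only [mem_filter, pattern, mem_univ, true_and]
  constructor
  · rintro ⟨hxe, j, hj, hxj⟩
    obtain ⟨y, hy⟩ := hj
    rw [mem_inter] at hy
    have hxy : x = y := by
      obtain ⟨z, hz⟩ := card_eq_one.mp (hp j)
      have h1 : x ∈ e ∩ X j := mem_inter.mpr ⟨hxe, hxj⟩
      have h2 : y ∈ e ∩ X j := mem_inter.mpr ⟨hS hy.1, hy.2⟩
      rw [hz, mem_singleton] at h1 h2
      rw [h1, h2]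
    exact hxy ▸ hy.1
  · intro hxS
    have hxe : x ∈ e := hS hxS
    have : x ∈ Finset.univ.biUnion X := hXc ▸ he hxe
    obtain ⟨j, _, hxj⟩ := mem_biUnion.mp this
    exact ⟨hxe, j, ⟨x, mem_inter.mpr ⟨hxS, hxj⟩⟩, hxj⟩

end Aux

open Finset in
set_option maxHeartbeats 1600000 in
/-- Claim 4.3 (combining Claims 4.2 and 4.3): in the setting of the basic procedure with
`a, b ≥ 2`, `r = a + b ≥ 5`, for every set `Y` with `a ≤ |Y| ≤ r - 1` the number of
vertices `v ∉ Y` that occur as `v = c(E)` (the vertex of `E` in the last part of its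
partition) for some edge `E ⊇ Y` of some `𝓗 i` is at most `s - 1`. -/
theorem few_centers (a b s h r n m : ℕ) (ha : 2 ≤ a) (hb : 2 ≤ b) (hs : 0 < s) (hh : 0 < h)
    (hr : r = a + b) (hr5 : 5 ≤ r)
    (H : Finset (Finset ℕ)) (hH : ∀ e ∈ H, e ⊆ Finset.Icc 1 n ∧ e.card = r)
    (hbush : ¬ ContainsBush a b s h H)
    (𝓗 : Fin m → Finset (Finset ℕ)) (hsub : ∀ i, 𝓗 i ⊆ H)
    (hdisj : ∀ i i' : Fin m, i ≠ i' → Disjoint (𝓗 i) (𝓗 i'))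
    (X : Fin m → Fin r → Finset ℕ) (hpart : ∀ i, IsPartitionOf n r (X i))
    (hpartite : ∀ i, ∀ e ∈ 𝓗 i, ∀ j, (e ∩ X i j).card = 1)
    (J : Fin m → Finset (Finset (Fin r)))
    (hproper : ∀ i, ∀ A ∈ J i, A ⊂ Finset.univ)
    (hpattern : ∀ i, ∀ e ∈ 𝓗 i, (interStr e (𝓗 i)).image (pattern (X i)) = J i)
    (hinter : ∀ i, ∀ A ∈ J i, ∀ B ∈ J i, A ∩ B ∈ J i)
    (hbig : ∀ i, ∀ j : Fin r, (j : ℕ) < r - 1 → Finset.univ.erase j ∈ J i)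
    (hker : ∀ i, ∀ e ∈ 𝓗 i, ∀ P ∈ J i,
      IsKernelOf (s * h * r) (𝓗 i) (e.filter fun x => ∃ j ∈ P, x ∈ X i j))
    (Y : Finset ℕ) (hY : Y ⊆ Finset.Icc 1 n) (hYlb : a ≤ Y.card) (hYub : Y.card ≤ r - 1) :
    {v : ℕ | v ∈ Finset.Icc 1 n ∧ v ∉ Y ∧
        ∃ i, ∃ e ∈ 𝓗 i, Y ⊆ e ∧ e ∩ X i ⟨r - 1, by omega⟩ = {v}}.ncard ≤ s - 1 := by
  classical
  by_contra hcon
  push_neg at hcon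
  -- extract s distinct centers
  obtain ⟨Tset, hTsub, hTcard⟩ := Set.exists_subset_card_eq
    (show s ≤ Set.ncard {v : ℕ | v ∈ Finset.Icc 1 n ∧ v ∉ Y ∧
        ∃ i, ∃ e ∈ 𝓗 i, Y ⊆ e ∧ e ∩ X i ⟨r - 1, by omega⟩ = {v}} by omega)
  have hTfin : Tset.Finite := by
    apply Set.Finite.subset (Finset.Icc 1 n).finite_toSet
    intro x hx
    exact Finset.mem_coe.mpr (hTsub hx).1
  have hTc : #hTfin.toFinset = s := by
    rw [← Set.ncard_eq_toFinset_card Tset hTfin, hTcard]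
  set v : Fin s → ℕ := fun k => ((hTfin.toFinset.orderIsoOfFin hTc) k : ℕ) with hvdef
  have hvinj : Function.Injective v := fun k k' hkk' =>
    (hTfin.toFinset.orderIsoOfFin hTc).injective (Subtype.ext hkk')
  have hvprop : ∀ k : Fin s, v k ∈ Finset.Icc 1 n ∧ v k ∉ Y ∧
      ∃ i, ∃ e ∈ 𝓗 i, Y ⊆ e ∧ e ∩ X i ⟨r - 1, by omega⟩ = {v k} := fun k =>
    hTsub (hTfin.mem_toFinset.mp ((hTfin.toFinset.orderIsoOfFin hTc) k).2)
  choose i E hE1 hE2 hE3 using fun k => (hvprop k).2.2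
  have hvY : ∀ k, v k ∉ Y := fun k => (hvprop k).2.1
  have hEH : ∀ k, E k ∈ H := fun k => hsub _ (hE1 k)
  have hEcard : ∀ k, #(E k) = r := fun k => (hH _ (hEH k)).2
  have hvEX : ∀ k, v k ∈ E k ∩ X (i k) ⟨r - 1, by omega⟩ := fun k => by
    rw [hE3 k]; exact Finset.mem_singleton_self _
  have hvX : ∀ k, v k ∈ X (i k) ⟨r - 1, by omega⟩ := fun k => (Finset.mem_inter.mp (hvEX k)).2
  have hvE : ∀ k, v k ∈ E k := fun k => (Finset.mem_inter.mp (hvEX k)).1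
  -- the core A
  obtain ⟨A, hAY, hAcard⟩ := Finset.exists_subset_card_eq hYlb
  have hAE : ∀ k, A ⊆ E k := fun k => hAY.trans (hE2 k)
  have hvA : ∀ k, v k ∉ A := fun k hx => hvY k (hAY hx)
  have hAne : A.Nonempty := Finset.card_pos.mp (by rw [hAcard]; omega)
  -- the star builder
  have star_of : ∀ (i0 : Fin m) (e : Finset ℕ), e ∈ 𝓗 i0 → ∀ S : Finset ℕ, S ⊆ e →
      (S ∩ X i0 ⟨r - 1, by omega⟩).Nonempty → (e \ S).Nonempty →
      ∃ St ⊆ 𝓗 i0, #St = s * h * r ∧ ∀ P₁ ∈ St, ∀ P₂ ∈ St, P₁ ≠ P₂ → P₁ ∩ P₂ = S := by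
    intro i0 e he S hSe hlastS hneS
    have hJ : pattern (X i0) S ∈ J i0 := by
      apply mem_J_of (by omega) (J i0) (hinter i0) (hbig i0)
      · simp only [pattern, Finset.mem_filter, Finset.mem_univ, true_and]
        exact hlastS
      · intro hu
        obtain ⟨x, hx⟩ := hneS
        rw [Finset.mem_sdiff] at hx
        have hxI : x ∈ Finset.univ.biUnion (X i0) := by
          rw [(hpart i0).2]; exact (hH e (hsub i0 he)).1 hx.1
        obtain ⟨j, _, hxj⟩ := Finset.mem_biUnion.mp hxI
        have hj : j ∈ pattern (X i0) S := hu ▸ Finset.mem_univ j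
        simp only [pattern, Finset.mem_filter, Finset.mem_univ, true_and] at hj
        obtain ⟨y, hy⟩ := hj
        rw [Finset.mem_inter] at hy
        obtain ⟨z, hz⟩ := Finset.card_eq_one.mp (hpartite i0 e he j)
        have h1 : x ∈ e ∩ X i0 j := Finset.mem_inter.mpr ⟨hx.1, hxj⟩
        have h2 : y ∈ e ∩ X i0 j := Finset.mem_inter.mpr ⟨hSe hy.1, hy.2⟩
        rw [hz, Finset.mem_singleton] at h1 h2
        exact hx.2 (by rw [h1, ← h2]; exact hy.1)
    have hk := hker i0 e he _ hJ
    rw [filter_pattern_eq (X i0) (hpart i0).2 e (hH e (hsub i0 he)).1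
      (hpartite i0 e he) S hSe] at hk
    exact hk
  have hshr1 : 1 < s * h * r := by
    have h1 : 1 * 1 * r ≤ s * h * r :=
      Nat.mul_le_mul (Nat.mul_le_mul hs hh) (le_refl r)
    omega
  have star_sub : ∀ (K : Finset ℕ) (St : Finset (Finset ℕ)), #St = s * h * r →
      (∀ P₁ ∈ St, ∀ P₂ ∈ St, P₁ ≠ P₂ → P₁ ∩ P₂ = K) → ∀ F ∈ St, K ⊆ F := by
    intro K St hcard hpair F hF
    obtain ⟨F', hF', hne⟩ := Finset.exists_mem_ne (by rw [hcard]; exact hshr1) F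
    rw [← hpair F' hF' F hF hne]
    exact Finset.inter_subset_right
  -- stage 1 stars, kernels K k = insert (v k) A
  have hKcard : ∀ k : Fin s, #(insert (v k) A) = a + 1 := fun k => by
    rw [Finset.card_insert_of_notMem (hvA k), hAcard]
  have hKE : ∀ k, insert (v k) A ⊆ E k := fun k => Finset.insert_subset (hvE k) (hAE k)
  have hstar1 : ∀ k : Fin s, ∃ St ⊆ 𝓗 (i k), #St = s * h * r ∧
      ∀ P₁ ∈ St, ∀ P₂ ∈ St, P₁ ≠ P₂ → P₁ ∩ P₂ = insert (v k) A := by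
    intro k
    apply star_of (i k) (E k) (hE1 k) _ (hKE k)
    · exact ⟨v k, Finset.mem_inter.mpr ⟨Finset.mem_insert_self _ _, hvX k⟩⟩
    · rw [← Finset.card_pos, Finset.card_sdiff_of_subset (hKE k), hEcard k, hKcard k]; omega
  choose St1 hSt1sub hSt1card hSt1pair using hstar1
  have hKsubF : ∀ k, ∀ F ∈ St1 k, insert (v k) A ⊆ F := fun k =>
    star_sub _ _ (hSt1card k) (hSt1pair k)
  -- stage 1 selection
  set C1 : Fin s → Finset (Finset ℕ) := fun k => (St1 k).image (· \ insert (v k) A) with hC1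
  have hC1disj : ∀ k, ∀ P ∈ C1 k, ∀ Q ∈ C1 k, P ≠ Q → Disjoint P Q := by
    intro k P hP Q hQ hne
    obtain ⟨F, hF, rfl⟩ := Finset.mem_image.mp hP
    obtain ⟨F', hF', rfl⟩ := Finset.mem_image.mp hQ
    have hFF : F ≠ F' := by rintro rfl; exact hne rfl
    rw [Finset.disjoint_left]
    intro x hx hx'
    rw [Finset.mem_sdiff] at hx hx'
    have hmem : x ∈ F ∩ F' := Finset.mem_inter.mpr ⟨hx.1, hx'.1⟩
    rw [hSt1pair k F hF F' hF' hFF] at hmem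
    exact hx.2 hmem
  have hC1card : ∀ k, #(C1 k) = s * h * r := by
    intro k
    rw [Finset.card_image_of_injOn, hSt1card k]
    intro F hF F' hF' hEq
    have h1 := Finset.union_sdiff_of_subset (hKsubF k F hF)
    have h2 := Finset.union_sdiff_of_subset (hKsubF k F' hF')
    dsimp only at hEq
    rw [← h1, ← h2, hEq]
  have hC1M : ∀ k, ∀ P ∈ C1 k, #P ≤ b - 1 := by
    intro k P hP
    obtain ⟨F, hF, rfl⟩ := Finset.mem_image.mp hP
    rw [Finset.card_sdiff_of_subset (hKsubF k F hF), (hH F (hsub _ (hSt1sub k hF))).2, hKcard k]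
    omega
  have arith1 : s + (s - 1) * (b - 1) < s * h * r := by
    obtain ⟨b', rfl⟩ : ∃ b', b = b' + 1 := ⟨b - 1, by omega⟩
    obtain ⟨h', rfl⟩ : ∃ h', h = h' + 1 := ⟨h - 1, by omega⟩
    obtain ⟨s', rfl⟩ : ∃ s', s = s' + 1 := ⟨s - 1, by omega⟩
    subst hr
    simp only [Nat.add_sub_cancel]
    have h1 : (s' + 1) * 1 * (a + (b' + 1)) ≤ (s' + 1) * (h' + 1) * (a + (b' + 1)) :=
      Nat.mul_le_mul_right _ (Nat.mul_le_mul_left _ (by omega))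
    have h2 : (s' + 1) * (b' + 3) ≤ (s' + 1) * (a + (b' + 1)) :=
      Nat.mul_le_mul_left _ (by omega)
    have h3 : (s' + 1) * (b' + 3) = s' * b' + 3 * s' + b' + 3 := by ring
    have h4 : (s' + 1) * 1 * (a + (b' + 1)) = (s' + 1) * (a + (b' + 1)) := by ring
    linarith
  obtain ⟨f, hf1, hf2, hf3⟩ := select (b - 1) C1
    (fun _ => (Finset.univ : Finset (Fin s)).image v) Finset.univ hC1disj hC1M (by
      intro k
      rw [hC1card k]
      have hW1 : #((Finset.univ : Finset (Fin s)).image v) ≤ s :=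
        le_trans Finset.card_image_le (by simp)
      have huniv : #(Finset.univ : Finset (Fin s)) = s := by simp
      rw [huniv]
      omega)
  choose F hFSt hFtail using fun k => Finset.mem_image.mp (hf1 k (Finset.mem_univ k))
  have hF𝓗 : ∀ k, F k ∈ 𝓗 (i k) := fun k => hSt1sub k (hFSt k)
  have hFH : ∀ k, F k ∈ H := fun k => hsub _ (hF𝓗 k)
  have hKF : ∀ k, insert (v k) A ⊆ F k := fun k => hKsubF k _ (hFSt k)
  have hAF : ∀ k, A ⊆ F k := fun k => (Finset.subset_insert _ _).trans (hKF k)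
  have hvF : ∀ k, v k ∈ F k := fun k => hKF k (Finset.mem_insert_self _ _)
  have hFcard : ∀ k, #(F k) = r := fun k => (hH _ (hFH k)).2
  set B : Fin s → Finset ℕ := fun k => F k \ A with hBdef
  have hBcard : ∀ k, #(B k) = b := by
    intro k
    show #(F k \ A) = b
    rw [Finset.card_sdiff_of_subset (hAF k), hFcard k, hAcard]
    omega
  have hBeq : ∀ k, B k = insert (v k) (f k) := by
    intro k
    show F k \ A = insert (v k) (f k)
    rw [← hFtail k]
    ext x
    simp only [Finset.mem_sdiff, Finset.mem_insert]
    constructor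
    · rintro ⟨hxF, hxA⟩
      by_cases hxv : x = v k
      · exact Or.inl hxv
      · exact Or.inr ⟨hxF, fun hc => hc.elim hxv hxA⟩
    · rintro (rfl | ⟨hxF, hxK⟩)
      · exact ⟨hvF k, hvA k⟩
      · exact ⟨hxF, fun hxA => hxK (Or.inr hxA)⟩
  have hvB : ∀ k, v k ∈ B k := fun k => Finset.mem_sdiff.mpr ⟨hvF k, hvA k⟩
  have hvnotf : ∀ k k', v k ∉ f k' := by
    intro k k' hc
    have := hf2 k' (Finset.mem_univ k')
    exact (Finset.disjoint_left.mp this hc)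
      (Finset.mem_image.mpr ⟨k, Finset.mem_univ k, rfl⟩)
  have hBdisj : ∀ k k', k ≠ k' → Disjoint (B k) (B k') := by
    intro k k' hkk'
    rw [hBeq k, hBeq k', Finset.disjoint_left]
    intro x hx hx'
    rcases Finset.mem_insert.mp hx with rfl | hxf
    · rcases Finset.mem_insert.mp hx' with hv' | hxf'
      · exact hkk' (hvinj hv')
      · exact hvnotf k k' hxf'
    · rcases Finset.mem_insert.mp hx' with rfl | hxf'
      · exact hvnotf k' k hxf
      · exact Finset.disjoint_left.mp
          (hf3 k (Finset.mem_univ k) k' (Finset.mem_univ k') hkk') hxf hxf'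
  -- stage 2 stars, kernels B k
  have hstar2 : ∀ k : Fin s, ∃ St ⊆ 𝓗 (i k), #St = s * h * r ∧
      ∀ P₁ ∈ St, ∀ P₂ ∈ St, P₁ ≠ P₂ → P₁ ∩ P₂ = B k := by
    intro k
    apply star_of (i k) (F k) (hF𝓗 k) (B k) Finset.sdiff_subset
    · exact ⟨v k, Finset.mem_inter.mpr ⟨hvB k, hvX k⟩⟩
    · obtain ⟨x, hx⟩ := hAne
      exact ⟨x, Finset.mem_sdiff.mpr ⟨hAF k hx, fun hc => (Finset.mem_sdiff.mp hc).2 hx⟩⟩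
  choose St2 hSt2sub hSt2card hSt2pair using hstar2
  have hBsubG : ∀ k, ∀ G ∈ St2 k, B k ⊆ G := fun k =>
    star_sub _ _ (hSt2card k) (hSt2pair k)
  -- stage 2 selection
  set C2 : Fin s × Fin h → Finset (Finset ℕ) := fun p => (St2 p.1).image (· \ B p.1)
    with hC2
  set W2 : Fin s × Fin h → Finset ℕ :=
    fun p => A ∪ (Finset.univ.erase p.1).biUnion B with hW2
  have hC2disj : ∀ p, ∀ P ∈ C2 p, ∀ Q ∈ C2 p, P ≠ Q → Disjoint P Q := by
    intro p P hP Q hQ hne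
    obtain ⟨G, hG, rfl⟩ := Finset.mem_image.mp hP
    obtain ⟨G', hG', rfl⟩ := Finset.mem_image.mp hQ
    have hGG : G ≠ G' := by rintro rfl; exact hne rfl
    rw [Finset.disjoint_left]
    intro x hx hx'
    rw [Finset.mem_sdiff] at hx hx'
    have hmem : x ∈ G ∩ G' := Finset.mem_inter.mpr ⟨hx.1, hx'.1⟩
    rw [hSt2pair p.1 G hG G' hG' hGG] at hmem
    exact hx.2 hmem
  have hC2card : ∀ p, #(C2 p) = s * h * r := by
    intro p
    rw [Finset.card_image_of_injOn, hSt2card p.1]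
    intro G hG G' hG' hEq
    have h1 := Finset.union_sdiff_of_subset (hBsubG p.1 G hG)
    have h2 := Finset.union_sdiff_of_subset (hBsubG p.1 G' hG')
    dsimp only at hEq
    rw [← h1, ← h2, hEq]
  have hC2M : ∀ p, ∀ P ∈ C2 p, #P ≤ a := by
    intro p P hP
    obtain ⟨G, hG, rfl⟩ := Finset.mem_image.mp hP
    rw [Finset.card_sdiff_of_subset (hBsubG p.1 G hG), (hH G (hsub _ (hSt2sub p.1 hG))).2, hBcard p.1]
    omega
  have hW2card : ∀ p, #(W2 p) ≤ a + (s - 1) * b := by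
    intro p
    calc #(W2 p) ≤ #A + #((Finset.univ.erase p.1).biUnion B) := Finset.card_union_le _ _
      _ ≤ #A + ∑ k ∈ Finset.univ.erase p.1, #(B k) :=
          Nat.add_le_add_left Finset.card_biUnion_le _
      _ ≤ a + (s - 1) * b := by
          have hsum := Finset.sum_le_card_nsmul (Finset.univ.erase p.1)
            (fun k => #(B k)) b (fun k _ => le_of_eq (hBcard k))
          simp only [smul_eq_mul] at hsum
          have hce : #(Finset.univ.erase p.1) = s - 1 := by
            rw [Finset.card_erase_of_mem (Finset.mem_univ _)]
            simp
          rw [hce] at hsum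
          omega
  have arith2 : a + (s - 1) * b + (s * h - 1) * a < s * h * r := by
    obtain ⟨q, hq⟩ : ∃ q, s * h = q + 1 :=
      ⟨s * h - 1, by have : 1 ≤ s * h := Nat.one_le_iff_ne_zero.mpr (by positivity); omega⟩
    obtain ⟨s', rfl⟩ : ∃ s', s = s' + 1 := ⟨s - 1, by omega⟩
    subst hr
    rw [hq]
    simp only [Nat.add_sub_cancel]
    have hqs : s' ≤ q := by nlinarith
    nlinarith
  obtain ⟨g, hg1, hg2, hg3⟩ := select a C2 W2 Finset.univ hC2disj hC2M (by
    intro p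
    rw [hC2card p]
    have huniv : #(Finset.univ : Finset (Fin s × Fin h)) = s * h := by
      simp [Fintype.card_prod]
    rw [huniv]
    have := hW2card p
    omega)
  choose G hGSt hGtail using fun p => Finset.mem_image.mp (hg1 p (Finset.mem_univ p))
  have hG𝓗 : ∀ p : Fin s × Fin h, G p ∈ 𝓗 (i p.1) := fun p => hSt2sub p.1 (hGSt p)
  -- assemble the bush
  apply hbush
  refine ⟨A, B, fun k j => g (k, j), hAcard, hBcard, ?_, ?_, ?_, ?_, ?_, ?_, ?_, ?_⟩
  · intro k j
    dsimp only
    rw [← hGtail (k, j)]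
    have := (hH _ (hsub _ (hG𝓗 (k, j)))).2
    rw [Finset.card_sdiff_of_subset (hBsubG k _ (hGSt (k, j))), this, hBcard k]
    omega
  · intro k
    exact Finset.disjoint_sdiff
  · intro k j
    have hd := (hg2 (k, j) (Finset.mem_univ _)).symm
    exact hd.mono_left Finset.subset_union_left
  · exact hBdisj
  · intro k j k' j' hne
    exact hg3 (k, j) (Finset.mem_univ _) (k', j') (Finset.mem_univ _) (by
      intro hc
      exact hne hc)
  · intro k k' j
    by_cases hkk : k = k'
    · subst hkk
      dsimp only
      rw [← hGtail (k, j)]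
      exact Finset.disjoint_sdiff
    · have hd := (hg2 (k', j) (Finset.mem_univ _)).symm
      refine hd.mono_left ?_
      refine (Finset.subset_biUnion_of_mem B ?_).trans Finset.subset_union_right
      exact Finset.mem_erase.mpr ⟨hkk, Finset.mem_univ k⟩
  · intro k
    have := Finset.union_sdiff_of_subset (hAF k)
    show A ∪ (F k \ A) ∈ H
    rw [this]
    exact hFH k
  · intro k j
    dsimp only
    rw [← hGtail (k, j)]
    rw [Finset.union_sdiff_of_subset (hBsubG k _ (hGSt (k, j)))]
    exact hsub _ (hG𝓗 (k, j))
end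

section
/- Let s be a positive integer, V a finite set, u ∈ V, and let P be a finite family of finite subsets of V, each containing u, such that P_1 ∩ P_2 = {u} for all distinct P_1, P_2 ∈ P (P is a star with kernel {u}). Suppose that to each P ∈ P a set Q′(P) ⊆ V is assigned with |Q′(P)| ≤ s and Q′(P) ∩ P = ∅. Then there exists a subfamily P′ ⊆ P with |P′| ≥ |P| / (2s + 1) that is separable, i.e., (⋃_{P∈P′} Q′(P)) ∩ (⋃_{P∈P′} P) = ∅. -/
/-- A digraph with out-degree at most `s` on a finite vertex set `A` has an
independent set of size at least `|A| / (2s+1)`. -/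
lemma indep_of_outdeg {α : Type*} [DecidableEq α] (s : ℕ)
    (N : α → α → Prop) [DecidableRel N] :
    ∀ (n : ℕ) (A : Finset α), A.card = n →
      (∀ a ∈ A, (A.filter (fun b => N a b)).card ≤ s) →
      ∃ B ⊆ A, (A.card : ℝ) / (2 * (s : ℝ) + 1) ≤ (B.card : ℝ) ∧
        ∀ a ∈ B, ∀ b ∈ B, a ≠ b → ¬ N a b := by
  intro n
  induction n using Nat.strong_induction_on with
  | _ n ih =>
    intro A hcard hdeg
    rcases A.eq_empty_or_nonempty with rfl | hne
    · exact ⟨∅, Finset.Subset.refl _, by simp, by simp⟩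
    -- the symmetric "conflict" relation
    set r : α → α → Prop := fun a b => a ≠ b ∧ (N a b ∨ N b a) with hr
    have hrdec : ∀ a, DecidablePred (r a) := fun a b => instDecidableAnd
    -- double counting: total degree ≤ 2 s |A|
    have hsum : ∑ a ∈ A, (A.filter (fun b => r a b)).card ≤ 2 * s * A.card := by
      have h1 : ∀ a ∈ A, (A.filter (fun b => r a b)).card ≤
          (A.filter (fun b => N a b)).card + (A.filter (fun b => N b a)).card := by
        intro a _
        calc (A.filter (fun b => r a b)).card
            ≤ ((A.filter (fun b => N a b)) ∪ (A.filter (fun b => N b a))).card := by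
              apply Finset.card_le_card
              intro b hb
              simp only [Finset.mem_filter, Finset.mem_union] at *
              tauto
          _ ≤ _ := Finset.card_union_le _ _
      calc ∑ a ∈ A, (A.filter (fun b => r a b)).card
          ≤ ∑ a ∈ A, ((A.filter (fun b => N a b)).card +
              (A.filter (fun b => N b a)).card) := Finset.sum_le_sum h1
        _ = ∑ a ∈ A, (A.filter (fun b => N a b)).card +
              ∑ a ∈ A, (A.filter (fun b => N b a)).card := Finset.sum_add_distrib
        _ ≤ s * A.card + s * A.card := by
            have e1 : ∑ a ∈ A, (A.filter (fun b => N a b)).card ≤ s * A.card := by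
              calc ∑ a ∈ A, (A.filter (fun b => N a b)).card
                  ≤ ∑ _a ∈ A, s := Finset.sum_le_sum hdeg
                _ = s * A.card := by rw [Finset.sum_const, smul_eq_mul, mul_comm]
            have e2 : ∑ a ∈ A, (A.filter (fun b => N b a)).card
                = ∑ b ∈ A, (A.filter (fun a => N b a)).card := by
              simp only [Finset.card_filter]
              rw [Finset.sum_comm]
            have e3 : ∑ b ∈ A, (A.filter (fun a => N b a)).card ≤ s * A.card := by
              calc ∑ b ∈ A, (A.filter (fun a => N b a)).card
                  ≤ ∑ _b ∈ A, s := Finset.sum_le_sum hdeg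
                _ = s * A.card := by rw [Finset.sum_const, smul_eq_mul, mul_comm]
            omega
        _ = 2 * s * A.card := by ring
    -- there is a vertex of conflict-degree ≤ 2s
    have hex : ∃ a ∈ A, (A.filter (fun b => r a b)).card ≤ 2 * s := by
      by_contra h
      push_neg at h
      have : ∑ a ∈ A, (2 * s + 1) ≤ ∑ a ∈ A, (A.filter (fun b => r a b)).card :=
        Finset.sum_le_sum (fun a ha => h a ha)
      rw [Finset.sum_const, smul_eq_mul] at this
      have hc : 0 < A.card := Finset.card_pos.mpr hne
      nlinarith
    obtain ⟨a, haA, hadeg⟩ := hex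
    set S : Finset α := insert a (A.filter (fun b => r a b)) with hS
    have hScard : S.card ≤ 2 * s + 1 := by
      calc S.card ≤ (A.filter (fun b => r a b)).card + 1 := Finset.card_insert_le _ _
        _ ≤ 2 * s + 1 := by omega
    set A' : Finset α := A \ S with hA'
    have hA'sub : A' ⊆ A := Finset.sdiff_subset
    have haS : a ∈ S := Finset.mem_insert_self _ _
    have hA'lt : A'.card < n := by
      rw [← hcard]
      apply Finset.card_lt_card
      constructor
      · exact hA'sub
      · intro hsub
        have := hsub haA
        simp [hA'] at this
        exact this.2 haS
    have hA'deg : ∀ b ∈ A', (A'.filter (fun c => N b c)).card ≤ s := by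
      intro b hb
      calc (A'.filter (fun c => N b c)).card ≤ (A.filter (fun c => N b c)).card :=
            Finset.card_le_card (Finset.filter_subset_filter _ hA'sub)
        _ ≤ s := hdeg b (hA'sub hb)
    obtain ⟨B', hB'sub, hB'card, hB'ind⟩ := ih A'.card hA'lt A' rfl hA'deg
    refine ⟨insert a B', ?_, ?_, ?_⟩
    · intro x hx
      rcases Finset.mem_insert.mp hx with rfl | hx
      · exact haA
      · exact hA'sub (hB'sub hx)
    · have haB' : a ∉ B' := by
        intro h
        have := hB'sub h
        simp [hA'] at this
        exact this.2 haS
      rw [Finset.card_insert_of_notMem haB']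
      have hAcard : (A.card : ℝ) ≤ (A'.card : ℝ) + (2 * (s : ℝ) + 1) := by
        have h1 : A.card ≤ A'.card + S.card := by
          calc A.card ≤ (A' ∪ S).card := by
                apply Finset.card_le_card
                intro x hx
                by_cases hxS : x ∈ S
                · exact Finset.mem_union_right _ hxS
                · exact Finset.mem_union_left _ (by simp [hA', hx, hxS])
            _ ≤ A'.card + S.card := Finset.card_union_le _ _
        have h2 : A.card ≤ A'.card + (2 * s + 1) := by omega
        push_cast
        exact_mod_cast Nat.cast_le.mpr h2
      have hpos : (0 : ℝ) < 2 * (s : ℝ) + 1 := by positivity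
      rw [div_le_iff₀ hpos] at hB'card ⊢
      push_cast
      nlinarith
    · intro x hx y hy hxy
      rcases Finset.mem_insert.mp hx with rfl | hxB <;>
        rcases Finset.mem_insert.mp hy with rfl | hyB
      · exact absurd rfl hxy
      · -- x = a, y ∈ B' ⊆ A' : y not a conflict neighbor of a
        have hyA' := hB'sub hyB
        have : y ∉ A.filter (fun b => r x b) := by
          intro h
          have : y ∈ S := Finset.mem_insert_of_mem h
          simp [hA'] at hyA'
          exact hyA'.2 this
        intro hN
        exact this (Finset.mem_filter.mpr ⟨hA'sub hyA', hxy, Or.inl hN⟩)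
      · have hxA' := hB'sub hxB
        have : x ∉ A.filter (fun b => r y b) := by
          intro h
          have : x ∈ S := Finset.mem_insert_of_mem h
          simp [hA'] at hxA'
          exact hxA'.2 this
        intro hN
        exact this (Finset.mem_filter.mpr ⟨hA'sub hxA', Ne.symm hxy, Or.inr hN⟩)
      · exact hB'ind x hxB y hyB hxy

/-- Claim 5.1: if `𝓟` is a star with kernel `{u}` and each `P ∈ 𝓟` is assigned a set
`Q' P` of size at most `s` disjoint from `P`, then some subfamily `𝓟' ⊆ 𝓟` with
`|𝓟'| ≥ |𝓟| / (2s + 1)` is separable: `(⋃_{P ∈ 𝓟'} Q' P) ∩ (⋃ 𝓟') = ∅`. -/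
theorem separable_subfamily {V : Type*} [Fintype V] [DecidableEq V]
    (s : ℕ) (hs : 0 < s) (u : V)
    (𝓟 : Finset (Finset V)) (hu : ∀ P ∈ 𝓟, u ∈ P)
    (hstar : ∀ P₁ ∈ 𝓟, ∀ P₂ ∈ 𝓟, P₁ ≠ P₂ → P₁ ∩ P₂ = {u})
    (Q' : Finset V → Finset V)
    (hQ : ∀ P ∈ 𝓟, (Q' P).card ≤ s ∧ Disjoint (Q' P) P) :
    ∃ 𝓟' ⊆ 𝓟, (𝓟.card : ℝ) / (2 * (s : ℝ) + 1) ≤ (𝓟'.card : ℝ) ∧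
      Disjoint (𝓟'.biUnion Q') (𝓟'.biUnion id) := by
  set N : Finset V → Finset V → Prop := fun a b => (Q' a ∩ b).Nonempty with hN
  have hdeg : ∀ a ∈ 𝓟, (𝓟.filter (fun b => N a b)).card ≤ s := by
    intro a ha
    have hQa := hQ a ha
    calc (𝓟.filter (fun b => N a b)).card ≤ (Q' a).card := by
          apply Finset.card_le_card_of_injOn
            (fun b => if h : (Q' a ∩ b).Nonempty then h.choose else u)
          · intro b hb
            simp only [Finset.coe_filter, Set.mem_setOf_eq, Finset.mem_coe] at hb ⊢
            rw [dif_pos hb.2]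
            exact (Finset.mem_inter.mp hb.2.choose_spec).1
          · intro b₁ hb₁ b₂ hb₂ heq
            simp only [Finset.coe_filter, Set.mem_setOf_eq, hN] at hb₁ hb₂
            dsimp only at heq
            rw [dif_pos hb₁.2, dif_pos hb₂.2] at heq
            by_contra hne
            have h1 := hb₁.2.choose_spec
            have h2 := hb₂.2.choose_spec
            rw [Finset.mem_inter] at h1 h2
            have hv : hb₁.2.choose ∈ b₁ ∩ b₂ := by
              rw [Finset.mem_inter]
              exact ⟨h1.2, heq ▸ h2.2⟩
            rw [hstar b₁ hb₁.1 b₂ hb₂.1 hne] at hv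
            have : hb₁.2.choose = u := Finset.mem_singleton.mp hv
            exact (Finset.disjoint_left.mp hQa.2) h1.1 (this ▸ hu a ha)
      _ ≤ s := hQa.1
  obtain ⟨B, hBsub, hBcard, hBind⟩ :=
    indep_of_outdeg s N 𝓟.card 𝓟 rfl hdeg
  refine ⟨B, hBsub, hBcard, ?_⟩
  rw [Finset.disjoint_left]
  intro v hv1 hv2
  simp only [Finset.mem_biUnion, id] at hv1 hv2
  obtain ⟨a, haB, hva⟩ := hv1
  obtain ⟨b, hbB, hvb⟩ := hv2
  by_cases hab : a = b
  · subst hab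
    exact (Finset.disjoint_left.mp (hQ a (hBsub haB)).2) hva hvb
  · exact hBind a haB b hbB hab ⟨v, Finset.mem_inter.mpr ⟨hva, hvb⟩⟩
end

section
/- For a real number x and a positive integer k, define C(x,k) = x(x−1)⋯(x−k+1)/k! if x ≥ k − 1, and C(x,k) = 0 otherwise. Let r ≥ 3 and s ≥ 2 be integers, C, C_0 > 0 reals, and set b = 3·(r−1)!·(C + C_0). Suppose n ≥ r² and n ≥ s, and let x_1 ≥ x_2 ≥ ⋯ ≥ x_n be real numbers with r − 2 ≤ x_i ≤ n for all i, satisfying Σ_{i=1}^n C(x_i, r−1) ≥ (s−1)·C(n, r−1) − (C + C_0)·n^{r−2} and Σ_{i=1}^n C(x_i, r−2) ≤ (s−1)·C(n, r−2). Then x_i > n − b for every 1 ≤ i ≤ s − 1. -/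
/-- The generalized binomial coefficient `C(x, k) = x(x-1)⋯(x-k+1)/k!` for real `x ≥ k - 1`,
and `0` for `x < k - 1`. -/
noncomputable def genBinom (x : ℝ) (k : ℕ) : ℝ :=
  if (k : ℝ) - 1 ≤ x then (∏ i ∈ Finset.range k, (x - (i : ℝ))) / (Nat.factorial k : ℝ) else 0

lemma genBinom_nonneg (x : ℝ) (k : ℕ) : 0 ≤ genBinom x k := by
  unfold genBinom
  split_ifs with h
  · apply div_nonneg _ (by positivity)
    apply Finset.prod_nonneg
    intro i hi
    simp only [Finset.mem_range] at hi
    have : (i:ℝ) + 1 ≤ (k:ℝ) := by exact_mod_cast hi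
    linarith
  · exact le_refl 0

lemma genBinom_mono (k : ℕ) {x y : ℝ} (hxy : x ≤ y) : genBinom x k ≤ genBinom y k := by
  by_cases h1 : (k:ℝ) - 1 ≤ x
  · have h2 : (k:ℝ) - 1 ≤ y := le_trans h1 hxy
    unfold genBinom
    rw [if_pos h1, if_pos h2]
    gcongr (?_) / (Nat.factorial k : ℝ)
    apply Finset.prod_le_prod
    · intro i hi
      simp only [Finset.mem_range] at hi
      have : (i:ℝ) + 1 ≤ (k:ℝ) := by exact_mod_cast hi
      linarith
    · intro i _
      linarith
  · unfold genBinom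
    rw [if_neg h1]
    exact genBinom_nonneg y k

lemma genBinom_succ (x : ℝ) (k : ℕ) (hx : (k:ℝ) ≤ x) :
    ((k:ℝ) + 1) * genBinom x (k+1) = genBinom x k * (x - k) := by
  unfold genBinom
  rw [if_pos (by push_cast; linarith), if_pos (by linarith)]
  rw [Finset.prod_range_succ, Nat.factorial_succ]
  have hk : (0:ℝ) < (Nat.factorial k : ℝ) := by positivity
  push_cast
  field_simp

lemma prod_lb (n : ℕ) : ∀ k : ℕ, k ≤ n →
    (n:ℝ)^(k+1) - (∑ i ∈ Finset.range (k+1), (i:ℝ)) * (n:ℝ)^k ≤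
      ∏ i ∈ Finset.range (k+1), ((n:ℝ) - i) := by
  intro k
  induction k with
  | zero => simp
  | succ k ih =>
    intro hk
    have h1 := ih (by omega)
    rw [Finset.prod_range_succ, Finset.sum_range_succ]
    have hnk : (0:ℝ) ≤ (n:ℝ) - ((k:ℝ)+1) := by
      have : ((k+1:ℕ):ℝ) ≤ (n:ℝ) := by exact_mod_cast hk
      push_cast at this
      linarith
    have h2 := mul_le_mul_of_nonneg_right h1 hnk
    have hS : 0 ≤ ∑ i ∈ Finset.range (k+1), (i:ℝ) :=
      Finset.sum_nonneg fun i _ => by positivity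
    have hn0 : (0:ℝ) ≤ (n:ℝ)^k := by positivity
    have e1 : (n:ℝ)^(k+1) = (n:ℝ)^k * n := pow_succ _ _
    have e2 : (n:ℝ)^(k+1+1) = (n:ℝ)^(k+1) * n := pow_succ _ _
    push_cast at h2 ⊢
    nlinarith [mul_nonneg (mul_nonneg hS hn0) (by positivity : (0:ℝ) ≤ (k:ℝ)+1)]

set_option maxHeartbeats 1600000 in
/-- Lemma 6.2: with `b = 3(r-1)!(C + C₀)`, `n ≥ r²`, `n ≥ s`, and
`x₁ ≥ x₂ ≥ ⋯ ≥ x_n` reals in `[r-2, n]` satisfying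
`Σ C(xᵢ, r-1) ≥ (s-1)·C(n, r-1) - (C + C₀)·n^(r-2)` and
`Σ C(xᵢ, r-2) ≤ (s-1)·C(n, r-2)`, one has `xᵢ > n - b` for all `1 ≤ i ≤ s - 1`. -/
theorem college_algebra (r s n : ℕ) (hr : 3 ≤ r) (hs : 2 ≤ s)
    (C C0 : ℝ) (hC : 0 < C) (hC0 : 0 < C0)
    (b : ℝ) (hb : b = 3 * (Nat.factorial (r - 1) : ℝ) * (C + C0))
    (hn : r ^ 2 ≤ n) (hns : s ≤ n)
    (x : Fin n → ℝ) (hmono : ∀ i j : Fin n, i ≤ j → x j ≤ x i)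
    (hlb : ∀ i, (r : ℝ) - 2 ≤ x i) (hub : ∀ i, x i ≤ (n : ℝ))
    (hsum1 : ((s : ℝ) - 1) * genBinom (n : ℝ) (r - 1) - (C + C0) * (n : ℝ) ^ (r - 2) ≤
      ∑ i, genBinom (x i) (r - 1))
    (hsum2 : ∑ i, genBinom (x i) (r - 2) ≤ ((s : ℝ) - 1) * genBinom (n : ℝ) (r - 2)) :
    ∀ i : Fin n, (i : ℕ) < s - 1 → (n : ℝ) - b < x i := by
  intro j hj
  by_contra hcon
  push_neg at hcon
  have hrr : r ≤ r ^ 2 := Nat.le_self_pow two_ne_zero r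
  set r2 := r - 2 with hr2def
  have hr1 : r - 1 = r2 + 1 := by omega
  rw [hr1] at hsum1
  have hrcast : ((r2:ℕ):ℝ) = (r:ℝ) - 2 := by
    have h : (r2:ℕ) + 2 = r := by omega
    have h2 := congrArg (Nat.cast (R := ℝ)) h
    push_cast at h2
    linarith
  have hnr2 : r2 ≤ n := by omega
  have hnr2' : ((r2:ℕ):ℝ) ≤ (n:ℝ) := by exact_mod_cast hnr2
  have hK : (0:ℝ) < (r2:ℝ) + 1 := by positivity
  -- basic bounds
  have hbpos : 0 < b := by
    rw [hb]; positivity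
  have hxj : ((r2:ℕ):ℝ) ≤ x j := by rw [hrcast]; exact hlb j
  have hnbr2 : (0:ℝ) ≤ (n:ℝ) - b - (r2:ℝ) := by
    have := hcon
    linarith
  set G2 := genBinom (n:ℝ) r2 with hG2def
  have hG2 : 0 ≤ G2 := genBinom_nonneg _ _
  -- per-term key inequality
  have key : ∀ i : Fin n, ((r2:ℝ) + 1) * genBinom (x i) (r2+1) ≤
      b * (if i < j then genBinom (x i) r2 else 0) +
        ((n:ℝ) - b - (r2:ℝ)) * genBinom (x i) r2 := by
    intro i
    have hxi : ((r2:ℕ):ℝ) ≤ x i := by rw [hrcast]; exact hlb i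
    rw [genBinom_succ (x i) r2 hxi]
    have hGi : 0 ≤ genBinom (x i) r2 := genBinom_nonneg _ _
    by_cases hij : i < j
    · rw [if_pos hij]
      have hxu := hub i
      nlinarith
    · rw [if_neg hij]
      have hle : j ≤ i := le_of_not_gt hij
      have hxu : x i ≤ x j := hmono j i hle
      nlinarith
  -- sum the key inequality
  have hsumkey : ((r2:ℝ) + 1) * ∑ i, genBinom (x i) (r2+1) ≤
      b * ∑ i ∈ Finset.univ.filter (fun i => i < j), genBinom (x i) r2 +
        ((n:ℝ) - b - (r2:ℝ)) * ∑ i, genBinom (x i) r2 := by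
    rw [Finset.mul_sum, Finset.mul_sum, Finset.mul_sum, Finset.sum_filter, ← Finset.sum_add_distrib]
    apply Finset.sum_le_sum
    intro i _
    have := key i
    by_cases hij : i < j <;> simp [hij] at this ⊢ <;> linarith
  -- bound the filtered sum
  have hcard : (Finset.univ.filter (fun i : Fin n => i < j)).card ≤ (j:ℕ) := by
    rw [← Finset.card_range (j:ℕ)]
    refine Finset.card_le_card_of_injOn (fun i => (i:ℕ)) ?_ ?_
    · intro i hi
      simp only [Finset.mem_coe, Finset.mem_filter, Finset.mem_univ, true_and] at hi
      simp only [Finset.mem_coe, Finset.mem_range]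
      exact hi
    · intro a _ c _ h
      exact Fin.val_injective h
  have hjs : ((j:ℕ):ℝ) ≤ (s:ℝ) - 2 := by
    have : (j:ℕ) + 2 ≤ s := by omega
    have h2 : (((j:ℕ):ℕ):ℝ) + 2 ≤ (s:ℝ) := by exact_mod_cast this
    linarith
  have hA : ∑ i ∈ Finset.univ.filter (fun i : Fin n => i < j), genBinom (x i) r2 ≤
      ((s:ℝ) - 2) * G2 := by
    calc ∑ i ∈ Finset.univ.filter (fun i : Fin n => i < j), genBinom (x i) r2
        ≤ ∑ _i ∈ Finset.univ.filter (fun i : Fin n => i < j), G2 :=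
          Finset.sum_le_sum fun i _ => genBinom_mono r2 (hub i)
      _ = (Finset.univ.filter (fun i : Fin n => i < j)).card * G2 := by
          rw [Finset.sum_const, nsmul_eq_mul]
      _ ≤ ((s:ℝ) - 2) * G2 := by
          apply mul_le_mul_of_nonneg_right _ hG2
          calc ((Finset.univ.filter (fun i : Fin n => i < j)).card : ℝ)
              ≤ ((j:ℕ):ℝ) := by exact_mod_cast hcard
            _ ≤ (s:ℝ) - 2 := hjs
  -- the split identity at n
  have hEq : ((r2:ℝ) + 1) * genBinom (n:ℝ) (r2+1) = G2 * ((n:ℝ) - (r2:ℝ)) :=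
    genBinom_succ (n:ℝ) r2 hnr2'
  -- derive b * G2 ≤ (r2+1)(C+C0) n^r2
  have a1 : ((r2:ℝ)+1) * (((s:ℝ)-1) * genBinom (n:ℝ) (r2+1) - (C + C0) * (n:ℝ)^r2) ≤
      ((r2:ℝ)+1) * ∑ i, genBinom (x i) (r2+1) :=
    mul_le_mul_of_nonneg_left hsum1 (le_of_lt hK)
  have hEq2 : ((r2:ℝ)+1) * (((s:ℝ)-1) * genBinom (n:ℝ) (r2+1)) =
      ((s:ℝ)-1) * (G2 * ((n:ℝ) - (r2:ℝ))) := by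
    rw [show ((r2:ℝ)+1) * (((s:ℝ)-1) * genBinom (n:ℝ) (r2+1)) =
      ((s:ℝ)-1) * (((r2:ℝ)+1) * genBinom (n:ℝ) (r2+1)) by ring, hEq]
  have t1 : b * ∑ i ∈ Finset.univ.filter (fun i : Fin n => i < j), genBinom (x i) r2 ≤
      b * (((s:ℝ) - 2) * G2) := mul_le_mul_of_nonneg_left hA (le_of_lt hbpos)
  have t2 : ((n:ℝ) - b - (r2:ℝ)) * ∑ i, genBinom (x i) r2 ≤
      ((n:ℝ) - b - (r2:ℝ)) * (((s:ℝ) - 1) * G2) := mul_le_mul_of_nonneg_left hsum2 hnbr2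
  have hmain : b * G2 ≤ ((r2:ℝ)+1) * ((C + C0) * (n:ℝ)^r2) := by
    linarith [a1, hsumkey, t1, t2, hEq2]
  -- now contradiction: G2 > n^r2 / (3 * r2!)
  have hfact : (Nat.factorial (r-1) : ℝ) = ((r2:ℝ)+1) * (Nat.factorial r2 : ℝ) := by
    rw [hr1, Nat.factorial_succ]
    push_cast
    ring
  have hG2eq : G2 = (∏ i ∈ Finset.range r2, ((n:ℝ) - i)) / (Nat.factorial r2 : ℝ) := by
    rw [hG2def]
    unfold genBinom
    rw [if_pos (by linarith)]
  -- product lower bound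
  obtain ⟨m, hm⟩ : ∃ m, r2 = m + 1 := ⟨r - 3, by omega⟩
  have hmn : m ≤ n := by omega
  have hplb := prod_lb n m hmn
  have hsumid : (∑ i ∈ Finset.range (m+1), (i:ℝ)) = (m:ℝ) * ((m:ℝ)+1) / 2 := by
    have h := Finset.sum_range_id_mul_two (m+1)
    have h2 : ((∑ i ∈ Finset.range (m+1), i) * 2 : ℕ) = ((m+1) * m : ℕ) := h
    have h3 : ((∑ i ∈ Finset.range (m+1), i : ℕ) : ℝ) * 2 = ((m:ℝ)+1) * m := by
      exact_mod_cast congrArg (Nat.cast (R := ℝ)) h2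
    have h4 : ((∑ i ∈ Finset.range (m+1), i : ℕ) : ℝ) = ∑ i ∈ Finset.range (m+1), (i:ℝ) := by
      push_cast; ring
    linarith [h4 ▸ h3]
  have hmm : (m:ℝ) * ((m:ℝ)+1) ≤ (n:ℝ) := by
    have hmr : m + 3 = r := by omega
    have h1 : (m+3)^2 ≤ n := hmr ▸ hn
    have : m * (m+1) ≤ n := by nlinarith [h1]
    exact_mod_cast this
  have hnpos : (0:ℝ) < (n:ℝ) := by
    have : 0 < n := by omega
    exact_mod_cast this
  have hprod : (n:ℝ)^r2 / 2 ≤ ∏ i ∈ Finset.range r2, ((n:ℝ) - i) := by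
    rw [hm]
    rw [hsumid] at hplb
    have hnm : (0:ℝ) ≤ (n:ℝ)^m := by positivity
    have e1 : (n:ℝ)^(m+1) = (n:ℝ)^m * n := pow_succ _ _
    nlinarith
  have hfpos : (0:ℝ) < (Nat.factorial r2 : ℝ) := by positivity
  have hG2lb : (n:ℝ)^r2 ≤ 2 * (Nat.factorial r2 : ℝ) * G2 := by
    have he : 2 * (Nat.factorial r2 : ℝ) *
        ((∏ i ∈ Finset.range r2, ((n:ℝ) - i)) / (Nat.factorial r2 : ℝ)) =
        2 * (∏ i ∈ Finset.range r2, ((n:ℝ) - i)) := by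
      field_simp
    rw [hG2eq, he]
    linarith [hprod]
  -- final contradiction
  rw [hb, hfact] at hmain
  have hCC : (0:ℝ) < C + C0 := by linarith
  have hnp : (0:ℝ) < (n:ℝ)^r2 := by positivity
  have h5 : ((r2:ℝ)+1) * ((C + C0) * ((n:ℝ)^r2)) ≤
      ((r2:ℝ)+1) * ((C + C0) * (2 * (Nat.factorial r2 : ℝ) * G2)) :=
    mul_le_mul_of_nonneg_left (mul_le_mul_of_nonneg_left hG2lb (le_of_lt hCC)) (le_of_lt hK)
  have h6 : ((r2:ℝ)+1) * (Nat.factorial r2 : ℝ) * ((C + C0) * G2) ≤ 0 := by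
    linarith [hmain, h5]
  have hG2pos : 0 < G2 := by nlinarith [hG2lb, hnp, hfpos]
  nlinarith [h6, mul_pos (mul_pos (mul_pos hK hfpos) hCC) hG2pos]
end
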